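/- arXiv:2307.06010 — 3 statements merged into one kernel-verified Lean document; each statement's English description precedes it below -/
import Mathlib

section
/- Let d ∈ ℕ, κ ∈ ℕ, and let b^i, d^i, m^{i,k} : ℕ₀^d × ℓ¹(ℕ₀^d) → [0,∞) (i ≠ k ∈ {1,…,d}) be nonnegative rate functions satisfying the vanishing conditions, the bound b^i(y,w), d^i(y,w), m^{i,k}(y,w) ≤ L(y_•+1), and the Lipschitz bound |b^i(y,w)−b^i(y,w′)| ≤ L‖w−w′‖₁ (and likewise for d^i, m^{i,k}) for some constant L. Define the κ-truncated rates b^{i,κ}(y,w) = 1_{{y_• ≤ κ}} b^i(y,w), and analogously d^{i,κ} and m^{i,k,κ}. Then for every ν ∈ M₁(ℕ₀^d) there exists a unique map v^κ from [0,∞) to the summable functions on ℕ₀^d such that v^κ(0) = ν; for every y with y_• > κ, v^κ_{y}(t) = ν_{y} for all t; and for every y with y_• ≤ κ the map t ↦ v^κ_{y}(t) is differentiable with (v^κ_{y})'(t) = −v^κ_{y}(t) ∑_{i=1}^d ( b^{i,κ}(y, v^κ(t)) + d^{i,κ}(y, v^κ(t)) + ∑_{k≠i} m^{i,k,κ}(y,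 v^κ(t)) ) + ∑_{i=1}^d ( v^κ_{y−e_i}(t) b^{i,κ}(y−e_i, v^κ(t)) + v^κ_{y+e_i}(t) d^{i,κ}(y+e_i, v^κ(t)) + ∑_{k≠i} v^κ_{y−e_k+e_i}(t) m^{i,k,κ}(y−e_k+e_i, v^κ(t)) ), with the convention that any term indexed by a vector having a negative coordinate is zero. -/
open scoped BigOperators

noncomputable section

/-- Total number of particles in a lineage state `y ∈ ℕ₀^d`, i.e. `y_• = ∑ i, y i`. -/
def bullet {d : ℕ} (y : Fin d → ℕ) : ℕ := ∑ i, y i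

/-- The `i`-th standard unit vector of `ℕ₀^d`. -/
def eVec {d : ℕ} (i : Fin d) : Fin d → ℕ := Pi.single i 1

/-- A probability measure on `ℕ₀^d`, identified with its probability mass function. -/
def IsPMF {d : ℕ} (ν : (Fin d → ℕ) → ℝ) : Prop := (∀ y, 0 ≤ ν y) ∧ HasSum ν 1

/-- The `κ`-truncation of a rate function: rates vanish on states `y` with `y_• > κ`. -/
def truncRate {d : ℕ} (κ : ℕ) (f : (Fin d → ℕ) → ((Fin d → ℕ) → ℝ) → ℝ) :
    (Fin d → ℕ) → ((Fin d → ℕ) → ℝ) → ℝ :=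
  fun y w => if bullet y ≤ κ then f y w else 0

/-- The right-hand side of the forward equation with rate functions `b, dth, m`, with the
convention that any term indexed by a vector having a negative coordinate is zero. -/
def fwdRHS {d : ℕ}
    (b dth : Fin d → (Fin d → ℕ) → ((Fin d → ℕ) → ℝ) → ℝ)
    (m : Fin d → Fin d → (Fin d → ℕ) → ((Fin d → ℕ) → ℝ) → ℝ)
    (v : ℝ → (Fin d → ℕ) → ℝ) (t : ℝ) (y : Fin d → ℕ) : ℝ :=
  -(v t y) * (∑ i, (b i y (v t) + dth i y (v t) +
      ∑ k ∈ Finset.univ.filter (fun k => k ≠ i), m i k y (v t)))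
    + ∑ i,
      ((if y i = 0 then 0 else v t (y - eVec i) * b i (y - eVec i) (v t))
        + v t (y + eVec i) * dth i (y + eVec i) (v t)
        + ∑ k ∈ Finset.univ.filter (fun k => k ≠ i),
            (if y k = 0 then 0 else
              v t (y - eVec k + eVec i) * m i k (y - eVec k + eVec i) (v t)))

/-- `v` is a solution of the `κ`-truncated initial value problem (3.2): it takes values in
the summable functions on `ℕ₀^d`, starts from `ν`, is frozen on states with `y_• > κ`, and
on states with `y_• ≤ κ` solves the forward equation for the `κ`-truncated rates. -/
def IsTruncSolution {d : ℕ} (κ : ℕ)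
    (b dth : Fin d → (Fin d → ℕ) → ((Fin d → ℕ) → ℝ) → ℝ)
    (m : Fin d → Fin d → (Fin d → ℕ) → ((Fin d → ℕ) → ℝ) → ℝ)
    (ν : (Fin d → ℕ) → ℝ) (v : ℝ → (Fin d → ℕ) → ℝ) : Prop :=
  v 0 = ν ∧ (∀ t ≥ (0 : ℝ), Summable (v t)) ∧
    (∀ y : Fin d → ℕ, κ < bullet y → ∀ t ≥ (0 : ℝ), v t y = ν y) ∧
    ∀ y : Fin d → ℕ, bullet y ≤ κ → ∀ t ≥ (0 : ℝ),
      HasDerivWithinAt (fun s => v s y)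
        (fwdRHS (fun i => truncRate κ (b i)) (fun i => truncRate κ (dth i))
          (fun i k => truncRate κ (m i k)) v t y)
        (Set.Ici 0) t

namespace Trunc


variable {d : ℕ}

lemma finite_S (κ : ℕ) : {y : Fin d → ℕ | bullet y ≤ κ}.Finite := by
  apply Set.Finite.subset (Set.Finite.pi (fun i : Fin d => Set.finite_Iic κ))
  intro y hy
  simp only [Set.mem_pi, Set.mem_univ, Set.mem_Iic, forall_true_left]
  intro i
  exact le_trans (Finset.single_le_sum (f := y) (fun j _ => Nat.zero_le _) (Finset.mem_univ i)) hy

instance fintypeS (κ : ℕ) : Fintype {y : Fin d → ℕ // bullet y ≤ κ} :=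
  (finite_S κ).fintype

/-- The finset of states with at most κ particles. -/
def T (d κ : ℕ) : Finset (Fin d → ℕ) :=
  (Finset.univ : Finset {y : Fin d → ℕ // bullet y ≤ κ}).image Subtype.val

lemma mem_T {κ : ℕ} {y : Fin d → ℕ} : y ∈ T d κ ↔ bullet y ≤ κ := by
  constructor
  · rintro h
    simp only [T, Finset.mem_image] at h
    obtain ⟨p, -, rfl⟩ := h
    exact p.2
  · intro h
    simp only [T, Finset.mem_image]
    exact ⟨⟨y, h⟩, Finset.mem_univ _, rfl⟩

/-- embed a finite vector into the full sequence space, frozen at ν outside. -/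
def emb (κ : ℕ) (ν : (Fin d → ℕ) → ℝ) (u : {y : Fin d → ℕ // bullet y ≤ κ} → ℝ) :
    (Fin d → ℕ) → ℝ :=
  fun y => if h : bullet y ≤ κ then u ⟨y, h⟩ else ν y

lemma emb_eq_of_le {κ : ℕ} {ν : (Fin d → ℕ) → ℝ} {u} {y : Fin d → ℕ} (h : bullet y ≤ κ) :
    emb κ ν u y = u ⟨y, h⟩ := dif_pos h

lemma emb_eq_of_gt {κ : ℕ} {ν : (Fin d → ℕ) → ℝ} {u} {y : Fin d → ℕ} (h : ¬ bullet y ≤ κ) :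
    emb κ ν u y = ν y := dif_neg h

lemma summable_emb {κ : ℕ} {ν : (Fin d → ℕ) → ℝ} (hν : Summable ν) (u) :
    Summable (emb κ ν u) := by
  have h1 : Summable (fun y => emb κ ν u y - ν y) := by
    apply summable_of_ne_finset_zero (s := T d κ)
    intro y hy
    rw [emb_eq_of_gt (fun h => hy (mem_T.2 h))]
    ring
  have := h1.add hν
  simpa using this

lemma abs_emb_le {κ : ℕ} {ν : (Fin d → ℕ) → ℝ} {u} {ρ : ℝ} (hρ : ∀ p, |u p| ≤ ρ)
    {y : Fin d → ℕ} (h : bullet y ≤ κ) : |emb κ ν u y| ≤ ρ := by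
  rw [emb_eq_of_le h]; exact hρ _

/-- ℓ¹ distance of embeddings is controlled by sup distance. -/
lemma tsum_abs_emb_sub_le {κ : ℕ} {ν : (Fin d → ℕ) → ℝ} (u u') {δ : ℝ} (hδ : 0 ≤ δ)
    (h : ∀ p, |u p - u' p| ≤ δ) :
    ∑' y, |emb κ ν u y - emb κ ν u' y| ≤ (T d κ).card * δ := by
  have hz : ∀ y ∉ T d κ, |emb κ ν u y - emb κ ν u' y| = 0 := by
    intro y hy
    have h' : ¬ bullet y ≤ κ := fun h => hy (mem_T.2 h)
    rw [emb_eq_of_gt h', emb_eq_of_gt h', sub_self, abs_zero]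
  rw [tsum_eq_sum hz]
  calc ∑ y ∈ T d κ, |emb κ ν u y - emb κ ν u' y| ≤ ∑ _y ∈ T d κ, δ := by
        apply Finset.sum_le_sum
        intro y hy
        have hb := mem_T.1 hy
        rw [emb_eq_of_le hb, emb_eq_of_le hb]
        exact h _
    _ = (T d κ).card * δ := by rw [Finset.sum_const, nsmul_eq_mul]

/- bullet arithmetic -/
lemma bullet_add_eVec (y : Fin d → ℕ) (i : Fin d) : bullet (y + eVec i) = bullet y + 1 := by
  simp only [bullet, eVec, Pi.add_apply, Finset.sum_add_distrib]
  congr 1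
  simp [Pi.single_apply]

lemma bullet_sub_eVec {y : Fin d → ℕ} {i : Fin d} (h : y i ≠ 0) :
    bullet (y - eVec i) + 1 = bullet y := by
  have : y - eVec i + eVec i = y := by
    funext j
    simp only [Pi.add_apply, Pi.sub_apply, eVec, Pi.single_apply]
    by_cases hj : j = i
    · subst hj; simp; omega
    · simp [hj]
  calc bullet (y - eVec i) + 1 = bullet (y - eVec i + eVec i) := (bullet_add_eVec _ i).symm
    _ = bullet y := by rw [this]

lemma bullet_sub_le (y : Fin d → ℕ) (i : Fin d) : bullet (y - eVec i) ≤ bullet y := by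
  apply Finset.sum_le_sum
  intro j _
  exact Nat.sub_le _ _

lemma bullet_sub_add_le {κ : ℕ} {y : Fin d → ℕ} {k i : Fin d} (hk : y k ≠ 0)
    (hy : bullet y ≤ κ) : bullet (y - eVec k + eVec i) ≤ κ := by
  rw [bullet_add_eVec, bullet_sub_eVec hk]; exact hy



variable {d : ℕ}


/-- bundled bounds for a (truncated) rate function -/
structure RateBnd (κ : ℕ) (M Lc : ℝ)
    (g : (Fin d → ℕ) → ((Fin d → ℕ) → ℝ) → ℝ) : Prop where
  nonneg : ∀ y w, Summable w → 0 ≤ g y w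
  bdd : ∀ y w, Summable w → g y w ≤ M
  vanish : ∀ y w, ¬ bullet y ≤ κ → g y w = 0
  lip : ∀ y w w', Summable w → Summable w' → |g y w - g y w'| ≤ Lc * ∑' x, |w x - w' x|

lemma RateBnd.abs_le {κ : ℕ} {M Lc : ℝ} {g} (h : RateBnd (d := d) κ M Lc g)
    {y w} (hw : Summable w) : |g y w| ≤ M := by
  rw [abs_of_nonneg (h.nonneg y w hw)]; exact h.bdd y w hw

lemma rateBnd_trunc {κ : ℕ} {L : ℝ} (hL : 0 ≤ L)
    {f : (Fin d → ℕ) → ((Fin d → ℕ) → ℝ) → ℝ}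
    (hnn : ∀ y w, Summable w → 0 ≤ f y w)
    (hgr : ∀ y w, Summable w → f y w ≤ L * ((bullet y : ℝ) + 1))
    (hlip : ∀ y w w', Summable w → Summable w' → |f y w - f y w'| ≤ L * ∑' x, |w x - w' x|) :
    RateBnd κ (L * ((κ : ℝ) + 1)) L (truncRate κ f) := by
  constructor
  · intro y w hw
    unfold truncRate
    split
    · exact hnn y w hw
    · exact le_refl 0
  · intro y w hw
    unfold truncRate
    split
    · exact (hgr y w hw).trans (by
        apply mul_le_mul_of_nonneg_left _ hL
        have : (bullet y : ℝ) ≤ (κ : ℝ) := by exact_mod_cast ‹bullet y ≤ κ›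
        linarith)
    · positivity
  · intro y w h
    exact if_neg h
  · intro y w w' hw hw'
    unfold truncRate
    split
    · exact hlip y w w' hw hw'
    · rw [sub_self, abs_zero]
      exact mul_nonneg hL (tsum_nonneg (fun x => abs_nonneg _))





variable {d : ℕ}

lemma prod_bound {c r M ρ : ℝ} (hc : |c| ≤ ρ) (hr0 : 0 ≤ r) (hrM : r ≤ M) :
    |c * r| ≤ M * ρ := by
  rw [abs_mul, abs_of_nonneg hr0]
  calc |c| * r ≤ ρ * M :=
        mul_le_mul hc hrM hr0 ((abs_nonneg c).trans hc)
    _ = M * ρ := by ring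

lemma prod_lip {c c' r r' δ η M ρ : ℝ} (hρ : 0 ≤ ρ)
    (hcc : |c - c'| ≤ δ) (hc' : |c'| ≤ ρ) (hr : |r| ≤ M) (hrr : |r - r'| ≤ η) :
    |c * r - c' * r'| ≤ M * δ + ρ * η := by
  have h : c * r - c' * r' = (c - c') * r + c' * (r - r') := by ring
  rw [h]
  refine (abs_add_le _ _).trans ?_
  rw [abs_mul, abs_mul]
  have h1 : |c - c'| * |r| ≤ δ * M :=
    mul_le_mul hcc hr (abs_nonneg _) ((abs_nonneg _).trans hcc)
  have h2 : |c'| * |r - r'| ≤ ρ * η := mul_le_mul hc' hrr (abs_nonneg _) hρ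
  linarith

variable {κ : ℕ} {M Lc : ℝ}
variable {Bt Dt : Fin d → (Fin d → ℕ) → ((Fin d → ℕ) → ℝ) → ℝ}
variable {Mt : Fin d → Fin d → (Fin d → ℕ) → ((Fin d → ℕ) → ℝ) → ℝ}

lemma card_filter_le_d (i : Fin d) :
    ((Finset.univ.filter (fun k => k ≠ i)).card : ℝ) ≤ (d : ℝ) := by
  have := Finset.card_filter_le (Finset.univ : Finset (Fin d)) (fun k => k ≠ i)
  rw [Finset.card_univ, Fintype.card_fin] at this
  exact_mod_cast this

lemma sum_filter_le {f : Fin d → ℝ} {a : ℝ} (ha : 0 ≤ a) (i : Fin d)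
    (h : ∀ k ∈ Finset.univ.filter (fun k => k ≠ i), f k ≤ a)
    (h0 : ∀ k ∈ Finset.univ.filter (fun k => k ≠ i), 0 ≤ f k) :
    ∑ k ∈ Finset.univ.filter (fun k => k ≠ i), f k ≤ (d : ℝ) * a := by
  calc ∑ k ∈ Finset.univ.filter (fun k => k ≠ i), f k
      ≤ ∑ _k ∈ Finset.univ.filter (fun k => k ≠ i), a := Finset.sum_le_sum h
    _ = ((Finset.univ.filter (fun k => k ≠ i)).card : ℝ) * a := by
        rw [Finset.sum_const, nsmul_eq_mul]
    _ ≤ (d : ℝ) * a := mul_le_mul_of_nonneg_right (card_filter_le_d i) ha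

/-- The loss rate sum: bounds. -/
lemma loss_sum_bounds (hM : 0 ≤ M)
    (hB : ∀ i, RateBnd κ M Lc (Bt i)) (hD : ∀ i, RateBnd κ M Lc (Dt i))
    (hMt : ∀ i k, k ≠ i → RateBnd κ M Lc (Mt i k))
    {w : (Fin d → ℕ) → ℝ} (hw : Summable w) (y : Fin d → ℕ) :
    0 ≤ (∑ i, (Bt i y w + Dt i y w +
        ∑ k ∈ Finset.univ.filter (fun k => k ≠ i), Mt i k y w)) ∧
      (∑ i, (Bt i y w + Dt i y w +
        ∑ k ∈ Finset.univ.filter (fun k => k ≠ i), Mt i k y w)) ≤ (d : ℝ) * (((d : ℝ) + 2) * M) := by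
  constructor
  · apply Finset.sum_nonneg
    intro i _
    have h1 := (hB i).nonneg y w hw
    have h2 := (hD i).nonneg y w hw
    have h3 : 0 ≤ ∑ k ∈ Finset.univ.filter (fun k => k ≠ i), Mt i k y w :=
      Finset.sum_nonneg (fun k hk => (hMt i k (Finset.mem_filter.1 hk).2).nonneg y w hw)
    linarith
  · calc ∑ i, (Bt i y w + Dt i y w + ∑ k ∈ Finset.univ.filter (fun k => k ≠ i), Mt i k y w)
        ≤ ∑ _i : Fin d, (M + M + (d : ℝ) * M) := by
          apply Finset.sum_le_sum
          intro i _
          have h1 := (hB i).bdd y w hw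
          have h2 := (hD i).bdd y w hw
          have h3 : ∑ k ∈ Finset.univ.filter (fun k => k ≠ i), Mt i k y w ≤ (d : ℝ) * M :=
            sum_filter_le hM i
              (fun k hk => (hMt i k (Finset.mem_filter.1 hk).2).bdd y w hw)
              (fun k hk => (hMt i k (Finset.mem_filter.1 hk).2).nonneg y w hw)
          linarith
      _ = (d : ℝ) * (M + M + (d : ℝ) * M) := by
          rw [Finset.sum_const, nsmul_eq_mul, Finset.card_univ, Fintype.card_fin]
      _ = (d : ℝ) * (((d : ℝ) + 2) * M) := by ring





variable {d : ℕ} {κ : ℕ} {M Lc : ℝ}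
variable {Bt Dt : Fin d → (Fin d → ℕ) → ((Fin d → ℕ) → ℝ) → ℝ}
variable {Mt : Fin d → Fin d → (Fin d → ℕ) → ((Fin d → ℕ) → ℝ) → ℝ}

lemma rhs_abs_le (hM : 0 ≤ M)
    (hB : ∀ i, RateBnd κ M Lc (Bt i)) (hD : ∀ i, RateBnd κ M Lc (Dt i))
    (hMt : ∀ i k, k ≠ i → RateBnd κ M Lc (Mt i k))
    {w : (Fin d → ℕ) → ℝ} {ρ : ℝ} (hw : Summable w) (hρ : 0 ≤ ρ)
    (hwρ : ∀ z, bullet z ≤ κ → |w z| ≤ ρ) {y : Fin d → ℕ} (hy : bullet y ≤ κ) :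
    |fwdRHS Bt Dt Mt (fun _ => w) 0 y| ≤ 2 * (d : ℝ) * ((d : ℝ) + 2) * M * ρ := by
  have hMρ : 0 ≤ M * ρ := mul_nonneg hM hρ
  unfold fwdRHS
  simp only []
  refine (abs_add_le _ _).trans ?_
  -- loss term
  obtain ⟨hS0, hSle⟩ := loss_sum_bounds hM hB hD hMt hw y
  have hA1 : |-(w y) * (∑ i, (Bt i y w + Dt i y w +
      ∑ k ∈ Finset.univ.filter (fun k => k ≠ i), Mt i k y w))|
      ≤ ((d : ℝ) * (((d : ℝ) + 2) * M)) * ρ := by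
    rw [neg_mul, abs_neg]
    exact prod_bound (hwρ y hy) hS0 hSle
  -- gain term
  have hA2 : |∑ i, ((if y i = 0 then 0 else w (y - eVec i) * Bt i (y - eVec i) w)
        + w (y + eVec i) * Dt i (y + eVec i) w
        + ∑ k ∈ Finset.univ.filter (fun k => k ≠ i),
            (if y k = 0 then 0 else w (y - eVec k + eVec i) * Mt i k (y - eVec k + eVec i) w))|
      ≤ (d : ℝ) * (((d : ℝ) + 2) * (M * ρ)) := by
    refine (Finset.abs_sum_le_sum_abs _ _).trans ?_
    calc ∑ i, |(if y i = 0 then 0 else w (y - eVec i) * Bt i (y - eVec i) w)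
          + w (y + eVec i) * Dt i (y + eVec i) w
          + ∑ k ∈ Finset.univ.filter (fun k => k ≠ i),
              (if y k = 0 then 0 else w (y - eVec k + eVec i) * Mt i k (y - eVec k + eVec i) w)|
        ≤ ∑ _i : Fin d, (M * ρ + M * ρ + (d : ℝ) * (M * ρ)) := by
          apply Finset.sum_le_sum
          intro i _
          refine ((abs_add_le _ _).trans (add_le_add (abs_add_le _ _) le_rfl)).trans ?_
          have hT1 : |if y i = 0 then (0:ℝ) else w (y - eVec i) * Bt i (y - eVec i) w| ≤ M * ρ := by
            split
            · simpa using hMρ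
            · exact prod_bound (hwρ _ ((bullet_sub_le y i).trans hy))
                ((hB i).nonneg _ w hw) ((hB i).bdd _ w hw)
          have hT2 : |w (y + eVec i) * Dt i (y + eVec i) w| ≤ M * ρ := by
            by_cases hbk : bullet (y + eVec i) ≤ κ
            · exact prod_bound (hwρ _ hbk) ((hD i).nonneg _ w hw) ((hD i).bdd _ w hw)
            · rw [(hD i).vanish _ w hbk, mul_zero, abs_zero]
              exact hMρ
          have hT3 : |∑ k ∈ Finset.univ.filter (fun k => k ≠ i),
              (if y k = 0 then (0:ℝ) else
                w (y - eVec k + eVec i) * Mt i k (y - eVec k + eVec i) w)| ≤ (d : ℝ) * (M * ρ) := by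
            refine (Finset.abs_sum_le_sum_abs _ _).trans ?_
            apply sum_filter_le hMρ i
            · intro k hk
              split
              · simpa using hMρ
              · exact prod_bound (hwρ _ (bullet_sub_add_le ‹y k ≠ 0› hy))
                  ((hMt i k (Finset.mem_filter.1 hk).2).nonneg _ w hw)
                  ((hMt i k (Finset.mem_filter.1 hk).2).bdd _ w hw)
            · intro k _
              exact abs_nonneg _
          linarith
      _ = (d : ℝ) * (M * ρ + M * ρ + (d : ℝ) * (M * ρ)) := by
          rw [Finset.sum_const, nsmul_eq_mul, Finset.card_univ, Fintype.card_fin]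
      _ = (d : ℝ) * (((d : ℝ) + 2) * (M * ρ)) := by ring
  calc _ ≤ ((d : ℝ) * (((d : ℝ) + 2) * M)) * ρ + (d : ℝ) * (((d : ℝ) + 2) * (M * ρ)) :=
        add_le_add hA1 hA2
    _ = 2 * (d : ℝ) * ((d : ℝ) + 2) * M * ρ := by ring





variable {d : ℕ} {κ : ℕ} {M Lc : ℝ}
variable {Bt Dt : Fin d → (Fin d → ℕ) → ((Fin d → ℕ) → ℝ) → ℝ}
variable {Mt : Fin d → Fin d → (Fin d → ℕ) → ((Fin d → ℕ) → ℝ) → ℝ}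

lemma loss_sum_lip
    (hB : ∀ i, RateBnd κ M Lc (Bt i)) (hD : ∀ i, RateBnd κ M Lc (Dt i))
    (hMt : ∀ i k, k ≠ i → RateBnd κ M Lc (Mt i k))
    {w w' : (Fin d → ℕ) → ℝ} {η : ℝ} (hw : Summable w) (hw' : Summable w') (hη : 0 ≤ η)
    (hrate : Lc * ∑' x, |w x - w' x| ≤ η) (y : Fin d → ℕ) :
    |(∑ i, (Bt i y w + Dt i y w +
        ∑ k ∈ Finset.univ.filter (fun k => k ≠ i), Mt i k y w)) -
      (∑ i, (Bt i y w' + Dt i y w' +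
        ∑ k ∈ Finset.univ.filter (fun k => k ≠ i), Mt i k y w'))|
      ≤ (d : ℝ) * (((d : ℝ) + 2) * η) := by
  rw [← Finset.sum_sub_distrib]
  refine (Finset.abs_sum_le_sum_abs _ _).trans ?_
  calc ∑ i, |(Bt i y w + Dt i y w + ∑ k ∈ Finset.univ.filter (fun k => k ≠ i), Mt i k y w)
        - (Bt i y w' + Dt i y w' + ∑ k ∈ Finset.univ.filter (fun k => k ≠ i), Mt i k y w')|
      ≤ ∑ _i : Fin d, (η + η + (d : ℝ) * η) := by
        apply Finset.sum_le_sum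
        intro i _
        have e : (Bt i y w + Dt i y w + ∑ k ∈ Finset.univ.filter (fun k => k ≠ i), Mt i k y w)
            - (Bt i y w' + Dt i y w' + ∑ k ∈ Finset.univ.filter (fun k => k ≠ i), Mt i k y w')
            = (Bt i y w - Bt i y w') + (Dt i y w - Dt i y w')
              + ∑ k ∈ Finset.univ.filter (fun k => k ≠ i), (Mt i k y w - Mt i k y w') := by
          rw [Finset.sum_sub_distrib]; ring
        rw [e]
        have h1 : |Bt i y w - Bt i y w'| ≤ η := ((hB i).lip y w w' hw hw').trans hrate
        have h2 : |Dt i y w - Dt i y w'| ≤ η := ((hD i).lip y w w' hw hw').trans hrate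
        have h3 : |∑ k ∈ Finset.univ.filter (fun k => k ≠ i), (Mt i k y w - Mt i k y w')|
            ≤ (d : ℝ) * η := by
          refine (Finset.abs_sum_le_sum_abs _ _).trans ?_
          apply sum_filter_le hη i
          · intro k hk
            exact ((hMt i k (Finset.mem_filter.1 hk).2).lip y w w' hw hw').trans hrate
          · intro k _; exact abs_nonneg _
        calc |(Bt i y w - Bt i y w') + (Dt i y w - Dt i y w')
              + ∑ k ∈ Finset.univ.filter (fun k => k ≠ i), (Mt i k y w - Mt i k y w')|
            ≤ |Bt i y w - Bt i y w'| + |Dt i y w - Dt i y w'|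
              + |∑ k ∈ Finset.univ.filter (fun k => k ≠ i), (Mt i k y w - Mt i k y w')| :=
              (abs_add_le _ _).trans (add_le_add (abs_add_le _ _) le_rfl)
          _ ≤ η + η + (d : ℝ) * η := by linarith
    _ = (d : ℝ) * (η + η + (d : ℝ) * η) := by
        rw [Finset.sum_const, nsmul_eq_mul, Finset.card_univ, Fintype.card_fin]
    _ = (d : ℝ) * (((d : ℝ) + 2) * η) := by ring

lemma rhs_lip (hM : 0 ≤ M)
    (hB : ∀ i, RateBnd κ M Lc (Bt i)) (hD : ∀ i, RateBnd κ M Lc (Dt i))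
    (hMt : ∀ i k, k ≠ i → RateBnd κ M Lc (Mt i k))
    {w w' : (Fin d → ℕ) → ℝ} {ρ δ η : ℝ} (hw : Summable w) (hw' : Summable w')
    (hρ : 0 ≤ ρ) (hδ : 0 ≤ δ) (hη : 0 ≤ η)
    (hw'ρ : ∀ z, bullet z ≤ κ → |w' z| ≤ ρ)
    (hdiff : ∀ z, bullet z ≤ κ → |w z - w' z| ≤ δ)
    (hrate : Lc * ∑' x, |w x - w' x| ≤ η)
    {y : Fin d → ℕ} (hy : bullet y ≤ κ) :
    |fwdRHS Bt Dt Mt (fun _ => w) 0 y - fwdRHS Bt Dt Mt (fun _ => w') 0 y|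
      ≤ 2 * (d : ℝ) * ((d : ℝ) + 2) * (M * δ + ρ * η) := by
  have hMδρη : 0 ≤ M * δ + ρ * η := by positivity
  unfold fwdRHS
  simp only []
  have e : ∀ a₁ b₁ a₂ b₂ : ℝ, (a₁ + b₁) - (a₂ + b₂) = (a₁ - a₂) + (b₁ - b₂) := fun _ _ _ _ => by ring
  rw [e]
  refine (abs_add_le _ _).trans ?_
  -- loss difference
  obtain ⟨hS0', hSle'⟩ := loss_sum_bounds hM hB hD hMt hw y
  have hA1 : |(-(w y) * (∑ i, (Bt i y w + Dt i y w +
        ∑ k ∈ Finset.univ.filter (fun k => k ≠ i), Mt i k y w))) -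
      (-(w' y) * (∑ i, (Bt i y w' + Dt i y w' +
        ∑ k ∈ Finset.univ.filter (fun k => k ≠ i), Mt i k y w')))|
      ≤ ((d : ℝ) * (((d : ℝ) + 2) * M)) * δ + ρ * ((d : ℝ) * (((d : ℝ) + 2) * η)) := by
    apply prod_lip hρ
    · rw [neg_sub_neg, abs_sub_comm]
      exact hdiff y hy
    · rw [abs_neg]; exact hw'ρ y hy
    · rw [abs_of_nonneg hS0']; exact hSle'
    · exact loss_sum_lip hB hD hMt hw hw' hη hrate y
  -- gain difference
  have hA2 : |(∑ i, ((if y i = 0 then 0 else w (y - eVec i) * Bt i (y - eVec i) w)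
        + w (y + eVec i) * Dt i (y + eVec i) w
        + ∑ k ∈ Finset.univ.filter (fun k => k ≠ i),
            (if y k = 0 then 0 else w (y - eVec k + eVec i) * Mt i k (y - eVec k + eVec i) w)))
      - (∑ i, ((if y i = 0 then 0 else w' (y - eVec i) * Bt i (y - eVec i) w')
        + w' (y + eVec i) * Dt i (y + eVec i) w'
        + ∑ k ∈ Finset.univ.filter (fun k => k ≠ i),
            (if y k = 0 then 0 else w' (y - eVec k + eVec i) * Mt i k (y - eVec k + eVec i) w')))|
      ≤ (d : ℝ) * (((d : ℝ) + 2) * (M * δ + ρ * η)) := by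
    rw [← Finset.sum_sub_distrib]
    refine (Finset.abs_sum_le_sum_abs _ _).trans ?_
    calc ∑ i, |((if y i = 0 then 0 else w (y - eVec i) * Bt i (y - eVec i) w)
          + w (y + eVec i) * Dt i (y + eVec i) w
          + ∑ k ∈ Finset.univ.filter (fun k => k ≠ i),
              (if y k = 0 then 0 else w (y - eVec k + eVec i) * Mt i k (y - eVec k + eVec i) w))
        - ((if y i = 0 then 0 else w' (y - eVec i) * Bt i (y - eVec i) w')
          + w' (y + eVec i) * Dt i (y + eVec i) w'
          + ∑ k ∈ Finset.univ.filter (fun k => k ≠ i),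
              (if y k = 0 then 0 else w' (y - eVec k + eVec i) * Mt i k (y - eVec k + eVec i) w'))|
        ≤ ∑ _i : Fin d, ((M * δ + ρ * η) + (M * δ + ρ * η) + (d : ℝ) * (M * δ + ρ * η)) := by
          apply Finset.sum_le_sum
          intro i _
          rw [e, e]
          have hT1 : |(if y i = 0 then (0:ℝ) else w (y - eVec i) * Bt i (y - eVec i) w)
              - (if y i = 0 then (0:ℝ) else w' (y - eVec i) * Bt i (y - eVec i) w')|
              ≤ M * δ + ρ * η := by
            split
            · simpa using hMδρη
            · apply prod_lip hρ (hdiff _ ((bullet_sub_le y i).trans hy))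
                (hw'ρ _ ((bullet_sub_le y i).trans hy)) ((hB i).abs_le hw)
                (((hB i).lip _ w w' hw hw').trans hrate)
          have hT2 : |w (y + eVec i) * Dt i (y + eVec i) w
              - w' (y + eVec i) * Dt i (y + eVec i) w'| ≤ M * δ + ρ * η := by
            by_cases hbk : bullet (y + eVec i) ≤ κ
            · apply prod_lip hρ (hdiff _ hbk) (hw'ρ _ hbk) ((hD i).abs_le hw)
                (((hD i).lip _ w w' hw hw').trans hrate)
            · rw [(hD i).vanish _ w hbk, (hD i).vanish _ w' hbk, mul_zero, mul_zero,
                sub_self, abs_zero]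
              exact hMδρη
          have hT3 : |(∑ k ∈ Finset.univ.filter (fun k => k ≠ i),
              (if y k = 0 then (0:ℝ) else
                w (y - eVec k + eVec i) * Mt i k (y - eVec k + eVec i) w))
              - (∑ k ∈ Finset.univ.filter (fun k => k ≠ i),
              (if y k = 0 then (0:ℝ) else
                w' (y - eVec k + eVec i) * Mt i k (y - eVec k + eVec i) w'))|
              ≤ (d : ℝ) * (M * δ + ρ * η) := by
            rw [← Finset.sum_sub_distrib]
            refine (Finset.abs_sum_le_sum_abs _ _).trans ?_
            apply sum_filter_le hMδρη i
            · intro k hk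
              split
              · simpa using hMδρη
              · apply prod_lip hρ (hdiff _ (bullet_sub_add_le ‹y k ≠ 0› hy))
                  (hw'ρ _ (bullet_sub_add_le ‹y k ≠ 0› hy))
                  ((hMt i k (Finset.mem_filter.1 hk).2).abs_le hw)
                  (((hMt i k (Finset.mem_filter.1 hk).2).lip _ w w' hw hw').trans hrate)
            · intro k _; exact abs_nonneg _
          calc _ ≤ |(if y i = 0 then (0:ℝ) else w (y - eVec i) * Bt i (y - eVec i) w)
                - (if y i = 0 then (0:ℝ) else w' (y - eVec i) * Bt i (y - eVec i) w')|
                + |w (y + eVec i) * Dt i (y + eVec i) w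
                  - w' (y + eVec i) * Dt i (y + eVec i) w'|
                + |(∑ k ∈ Finset.univ.filter (fun k => k ≠ i),
                    (if y k = 0 then (0:ℝ) else
                      w (y - eVec k + eVec i) * Mt i k (y - eVec k + eVec i) w))
                  - (∑ k ∈ Finset.univ.filter (fun k => k ≠ i),
                    (if y k = 0 then (0:ℝ) else
                      w' (y - eVec k + eVec i) * Mt i k (y - eVec k + eVec i) w'))| :=
              (abs_add_le _ _).trans (add_le_add (abs_add_le _ _) le_rfl)
          _ ≤ (M * δ + ρ * η) + (M * δ + ρ * η) + (d : ℝ) * (M * δ + ρ * η) := by linarith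
      _ = (d : ℝ) * ((M * δ + ρ * η) + (M * δ + ρ * η) + (d : ℝ) * (M * δ + ρ * η)) := by
          rw [Finset.sum_const, nsmul_eq_mul, Finset.card_univ, Fintype.card_fin]
      _ = (d : ℝ) * (((d : ℝ) + 2) * (M * δ + ρ * η)) := by ring
  calc _ ≤ (((d : ℝ) * (((d : ℝ) + 2) * M)) * δ + ρ * ((d : ℝ) * (((d : ℝ) + 2) * η)))
        + (d : ℝ) * (((d : ℝ) + 2) * (M * δ + ρ * η)) := add_le_add hA1 hA2
    _ = 2 * (d : ℝ) * ((d : ℝ) + 2) * (M * δ + ρ * η) := by ring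


end Trunc


namespace Trunc

section Field

variable {d κ : ℕ}
variable {M Lc : ℝ} {ν : (Fin d → ℕ) → ℝ}
variable {Bt Dt : Fin d → (Fin d → ℕ) → ((Fin d → ℕ) → ℝ) → ℝ}
variable {Mt : Fin d → Fin d → (Fin d → ℕ) → ((Fin d → ℕ) → ℝ) → ℝ}

/-- The finite-dimensional vector field. -/
def F (κ : ℕ) (ν : (Fin d → ℕ) → ℝ)
    (Bt Dt : Fin d → (Fin d → ℕ) → ((Fin d → ℕ) → ℝ) → ℝ)
    (Mt : Fin d → Fin d → (Fin d → ℕ) → ((Fin d → ℕ) → ℝ) → ℝ)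
    (u : {y : Fin d → ℕ // bullet y ≤ κ} → ℝ) : {y : Fin d → ℕ // bullet y ≤ κ} → ℝ :=
  fun p => fwdRHS Bt Dt Mt (fun _ => emb κ ν u) 0 p.1

lemma abs_emb_le_norm (u : {y : Fin d → ℕ // bullet y ≤ κ} → ℝ) {z : Fin d → ℕ}
    (hz : bullet z ≤ κ) : |emb κ ν u z| ≤ ‖u‖ := by
  rw [emb_eq_of_le hz]
  exact (norm_le_pi_norm u ⟨z, hz⟩)

lemma norm_F_le (hM : 0 ≤ M)
    (hB : ∀ i, RateBnd κ M Lc (Bt i)) (hD : ∀ i, RateBnd κ M Lc (Dt i))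
    (hMt : ∀ i k, k ≠ i → RateBnd κ M Lc (Mt i k)) (hν : Summable ν)
    (u : {y : Fin d → ℕ // bullet y ≤ κ} → ℝ) :
    ‖F κ ν Bt Dt Mt u‖ ≤ (2 * (d : ℝ) * ((d : ℝ) + 2) * M) * ‖u‖ := by
  have h0 : (0:ℝ) ≤ (2 * (d : ℝ) * ((d : ℝ) + 2) * M) * ‖u‖ := by positivity
  rw [pi_norm_le_iff_of_nonneg h0]
  intro p
  rw [Real.norm_eq_abs]
  exact rhs_abs_le hM hB hD hMt (summable_emb hν u) (norm_nonneg u)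
    (fun z hz => abs_emb_le_norm u hz) p.2

lemma norm_F_sub_le (hM : 0 ≤ M) (hLc : 0 ≤ Lc)
    (hB : ∀ i, RateBnd κ M Lc (Bt i)) (hD : ∀ i, RateBnd κ M Lc (Dt i))
    (hMt : ∀ i k, k ≠ i → RateBnd κ M Lc (Mt i k)) (hν : Summable ν)
    {ρ : ℝ} (hρ : 0 ≤ ρ) (u u' : {y : Fin d → ℕ // bullet y ≤ κ} → ℝ)
    (hu' : ‖u'‖ ≤ ρ) :
    ‖F κ ν Bt Dt Mt u - F κ ν Bt Dt Mt u'‖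
      ≤ (2 * (d : ℝ) * ((d : ℝ) + 2) * (M + ρ * (Lc * (T d κ).card))) * ‖u - u'‖ := by
  have hcard : (0:ℝ) ≤ ((T d κ).card : ℝ) := Nat.cast_nonneg _
  have h0 : (0:ℝ) ≤ (2 * (d : ℝ) * ((d : ℝ) + 2) * (M + ρ * (Lc * (T d κ).card))) * ‖u - u'‖ := by
    positivity
  rw [pi_norm_le_iff_of_nonneg h0]
  intro p
  rw [Pi.sub_apply, Real.norm_eq_abs]
  have key := rhs_lip (κ := κ) hM hB hD hMt (summable_emb hν u) (summable_emb hν u')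
    (ρ := ρ) (δ := ‖u - u'‖) (η := Lc * (T d κ).card * ‖u - u'‖)
    hρ (norm_nonneg _) (by positivity)
    (fun z hz => (abs_emb_le_norm u' hz).trans hu')
    (fun z hz => by
      rw [emb_eq_of_le hz, emb_eq_of_le hz]
      exact norm_le_pi_norm (u - u') ⟨z, hz⟩)
    (by
      have := tsum_abs_emb_sub_le (κ := κ) (ν := ν) u u' (norm_nonneg (u - u'))
        (fun p => norm_le_pi_norm (u - u') p)
      calc Lc * ∑' y, |emb κ ν u y - emb κ ν u' y| ≤ Lc * ((T d κ).card * ‖u - u'‖) :=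
            mul_le_mul_of_nonneg_left this hLc
        _ = Lc * (T d κ).card * ‖u - u'‖ := by ring) p.2
  calc |F κ ν Bt Dt Mt u p - F κ ν Bt Dt Mt u' p|
      ≤ 2 * (d : ℝ) * ((d : ℝ) + 2) * (M * ‖u - u'‖ + ρ * (Lc * (T d κ).card * ‖u - u'‖)) := key
    _ = (2 * (d : ℝ) * ((d : ℝ) + 2) * (M + ρ * (Lc * (T d κ).card))) * ‖u - u'‖ := by ring

end Field

end Trunc


namespace Trunc

section Sol

variable {d κ : ℕ}
variable {M Lc : ℝ} {ν : (Fin d → ℕ) → ℝ}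
variable {Bt Dt : Fin d → (Fin d → ℕ) → ((Fin d → ℕ) → ℝ) → ℝ}
variable {Mt : Fin d → Fin d → (Fin d → ℕ) → ((Fin d → ℕ) → ℝ) → ℝ}

lemma exists_local_sol (hM : 0 ≤ M) (hLc : 0 ≤ Lc)
    (hB : ∀ i, RateBnd κ M Lc (Bt i)) (hD : ∀ i, RateBnd κ M Lc (Dt i))
    (hMt : ∀ i k, k ≠ i → RateBnd κ M Lc (Mt i k)) (hν : Summable ν)
    {A hs : ℝ} (hA : A = 2 * (d : ℝ) * ((d : ℝ) + 2) * M) (hhs : hs = 1 / (2 * A + 1))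
    (t₀ : ℝ) (x₀ : {y : Fin d → ℕ // bullet y ≤ κ} → ℝ) :
    ∃ f : ℝ → ({y : Fin d → ℕ // bullet y ≤ κ} → ℝ), f t₀ = x₀ ∧
      ∀ t ∈ Set.Icc t₀ (t₀ + hs),
        HasDerivWithinAt f (F κ ν Bt Dt Mt (f t)) (Set.Icc t₀ (t₀ + hs)) t := by
  have hA0 : 0 ≤ A := by rw [hA]; positivity
  have h2A : (0:ℝ) < 2 * A + 1 := by linarith
  have hhs0 : 0 < hs := by rw [hhs]; positivity
  set R : ℝ := ‖x₀‖ + 1 with hR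
  have hR0 : 0 ≤ R := by positivity
  set ρb : ℝ := ‖x₀‖ + R with hρb
  have hρb0 : 0 ≤ ρb := by positivity
  set K : ℝ := 2 * (d : ℝ) * ((d : ℝ) + 2) * (M + ρb * (Lc * (T d κ).card)) with hK
  have hK0 : 0 ≤ K := by
    have : (0:ℝ) ≤ ((T d κ).card : ℝ) := Nat.cast_nonneg _
    rw [hK]; positivity
  set C : ℝ := A * (‖x₀‖ + R) with hC
  have hnorm : ∀ x ∈ Metric.closedBall x₀ R, ‖x‖ ≤ ‖x₀‖ + R := by
    intro x hx
    rw [Metric.mem_closedBall, dist_eq_norm] at hx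
    calc ‖x‖ = ‖x₀ + (x - x₀)‖ := by ring_nf
      _ ≤ ‖x₀‖ + ‖x - x₀‖ := norm_add_le _ _
      _ ≤ ‖x₀‖ + R := by linarith
  have hC0 : 0 ≤ C := by rw [hC]; positivity
  have hpl : IsPicardLindelof (fun _ u => F κ ν Bt Dt Mt u)
      (tmin := t₀) (tmax := t₀ + hs) ⟨t₀, le_refl _, by linarith⟩ x₀
      R.toNNReal 0 C.toNNReal K.toNNReal := by
    constructor
    · intro t _
      apply LipschitzOnWith.of_dist_le_mul
      intro x hx y hy
      rw [dist_eq_norm, dist_eq_norm, Real.coe_toNNReal _ hK0]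
      exact norm_F_sub_le hM hLc hB hD hMt hν hρb0 x y
        (hnorm y (by rwa [Real.coe_toNNReal _ hR0] at hy))
    · intro x _
      exact continuousOn_const
    · intro t _ x hx
      rw [Real.coe_toNNReal _ hC0]
      replace hx : x ∈ Metric.closedBall x₀ R := by rwa [Real.coe_toNNReal _ hR0] at hx
      calc ‖F κ ν Bt Dt Mt x‖ ≤ (2 * (d : ℝ) * ((d : ℝ) + 2) * M) * ‖x‖ :=
            norm_F_le hM hB hD hMt hν x
        _ = A * ‖x‖ := by rw [hA]
        _ ≤ C := by
            rw [hC]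
            exact mul_le_mul_of_nonneg_left (hnorm x hx) hA0
    · have hmax : max ((t₀ + hs) - t₀) (t₀ - t₀) = hs := by
        rw [show (t₀ + hs) - t₀ = hs by ring, sub_self, max_eq_left hhs0.le]
      have key : C * hs ≤ R := by
        rw [hhs, hC, hR]
        rw [mul_one_div, div_le_iff₀ h2A]
        have hx0 : 0 ≤ ‖x₀‖ := norm_nonneg _
        nlinarith [mul_nonneg hA0 hx0]
      simp only [NNReal.coe_zero, sub_zero, tsub_zero, Real.coe_toNNReal _ hR0,
        Real.coe_toNNReal _ hC0]
      show C * max ((t₀ + hs) - t₀) (t₀ - t₀) ≤ R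
      rw [hmax]
      exact key
  exact hpl.exists_eq_forall_mem_Icc_hasDerivWithinAt₀

end Sol

end Trunc


namespace Trunc

section Glue

variable {d κ : ℕ}
variable {M Lc : ℝ} {ν : (Fin d → ℕ) → ℝ}
variable {Bt Dt : Fin d → (Fin d → ℕ) → ((Fin d → ℕ) → ℝ) → ℝ}
variable {Mt : Fin d → Fin d → (Fin d → ℕ) → ((Fin d → ℕ) → ℝ) → ℝ}

lemma exists_global_sol (hM : 0 ≤ M) (hLc : 0 ≤ Lc)
    (hB : ∀ i, RateBnd κ M Lc (Bt i)) (hD : ∀ i, RateBnd κ M Lc (Dt i))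
    (hMt : ∀ i k, k ≠ i → RateBnd κ M Lc (Mt i k)) (hν : Summable ν)
    (x₀ : {y : Fin d → ℕ // bullet y ≤ κ} → ℝ) :
    ∃ u : ℝ → ({y : Fin d → ℕ // bullet y ≤ κ} → ℝ), u 0 = x₀ ∧
      ∀ t : ℝ, 0 ≤ t →
        HasDerivWithinAt u (F κ ν Bt Dt Mt (u t)) (Set.Ici 0) t := by
  set A : ℝ := 2 * (d : ℝ) * ((d : ℝ) + 2) * M with hA
  have hA0 : 0 ≤ A := by rw [hA]; positivity
  set hs : ℝ := 1 / (2 * A + 1) with hhs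
  have hhs0 : 0 < hs := by rw [hhs]; positivity
  have hloc : ∀ (t₀ : ℝ) (x : {y : Fin d → ℕ // bullet y ≤ κ} → ℝ),
      ∃ f : ℝ → ({y : Fin d → ℕ // bullet y ≤ κ} → ℝ), f t₀ = x ∧
        ∀ t ∈ Set.Icc t₀ (t₀ + hs),
          HasDerivWithinAt f (F κ ν Bt Dt Mt (f t)) (Set.Icc t₀ (t₀ + hs)) t :=
    fun t₀ x => exists_local_sol hM hLc hB hD hMt hν hA hhs t₀ x
  choose fs hfs0 hfsD using hloc
  set seq : ℕ → ℝ → ({y : Fin d → ℕ // bullet y ≤ κ} → ℝ) :=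
    fun n => Nat.rec (fs 0 x₀) (fun n g => fs (((n : ℝ) + 1) * hs) (g (((n : ℝ) + 1) * hs))) n
    with hseq
  have hseq0 : seq 0 = fs 0 x₀ := rfl
  have hseqS : ∀ n : ℕ, seq (n + 1) = fs (((n : ℝ) + 1) * hs) (seq n (((n : ℝ) + 1) * hs)) :=
    fun n => rfl
  have hseqI : ∀ n : ℕ, seq (n + 1) (((n : ℝ) + 1) * hs) = seq n (((n : ℝ) + 1) * hs) := by
    intro n
    rw [hseqS n]
    exact hfs0 _ _
  have hseqD : ∀ n : ℕ, ∀ t ∈ Set.Icc ((n : ℝ) * hs) ((n : ℝ) * hs + hs),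
      HasDerivWithinAt (seq n) (F κ ν Bt Dt Mt (seq n t))
        (Set.Icc ((n : ℝ) * hs) ((n : ℝ) * hs + hs)) t := by
    intro n
    cases n with
    | zero =>
      intro t ht
      simp only [Nat.cast_zero, zero_mul, zero_add] at ht ⊢
      have := hfsD 0 x₀ t (by simpa using ht)
      rw [hseq0]
      simpa using this
    | succ m =>
      intro t ht
      push_cast at ht ⊢
      have := hfsD (((m : ℝ) + 1) * hs) (seq m (((m : ℝ) + 1) * hs)) t ht
      rw [hseqS m]
      exact this
  set u : ℝ → ({y : Fin d → ℕ // bullet y ≤ κ} → ℝ) := fun t => seq ⌊t / hs⌋₊ t with hu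
  have ukey : ∀ (n : ℕ) (t : ℝ), (n : ℝ) * hs ≤ t → t ≤ ((n : ℝ) + 1) * hs → u t = seq n t := by
    intro n t h1 h2
    rcases eq_or_lt_of_le h2 with heq | hlt
    · subst heq
      have hfl : ⌊(((n : ℝ) + 1) * hs) / hs⌋₊ = n + 1 := by
        rw [mul_div_assoc, div_self (ne_of_gt hhs0), mul_one]
        rw [show ((n : ℝ) + 1) = ((n + 1 : ℕ) : ℝ) by push_cast; ring]
        exact Nat.floor_natCast _
      show seq ⌊(((n : ℝ) + 1) * hs) / hs⌋₊ (((n : ℝ) + 1) * hs) = seq n (((n : ℝ) + 1) * hs)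
      rw [hfl]
      exact hseqI n
    · have hn0 : (0:ℝ) ≤ (n : ℝ) * hs := by positivity
      have hfl : ⌊t / hs⌋₊ = n := by
        rw [Nat.floor_eq_iff (div_nonneg (hn0.trans h1) hhs0.le)]
        constructor
        · rw [le_div_iff₀ hhs0]; exact h1
        · rw [div_lt_iff₀ hhs0]; linarith
      show seq ⌊t / hs⌋₊ t = seq n t
      rw [hfl]
  have hpiece : ∀ n : ℕ, ∀ t ∈ Set.Icc ((n : ℝ) * hs) ((n : ℝ) * hs + hs),
      HasDerivWithinAt u (F κ ν Bt Dt Mt (u t))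
        (Set.Icc ((n : ℝ) * hs) ((n : ℝ) * hs + hs)) t := by
    intro n t ht
    have hc : ∀ s ∈ Set.Icc ((n : ℝ) * hs) ((n : ℝ) * hs + hs), u s = seq n s := by
      intro s hs'
      exact ukey n s hs'.1 (by
        have : ((n : ℝ) + 1) * hs = (n : ℝ) * hs + hs := by ring
        rw [this]; exact hs'.2)
    have hD := (hseqD n t ht).congr hc (hc t ht)
    rw [← hc t ht] at hD
    exact hD
  refine ⟨u, ?_, ?_⟩
  · have h1 : u 0 = seq 0 0 := by
      show seq ⌊(0:ℝ) / hs⌋₊ 0 = seq 0 0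
      norm_num
    rw [h1, hseq0]
    exact hfs0 0 x₀
  · intro t ht
    obtain ⟨n, hn⟩ : ∃ n : ℕ, ⌊t / hs⌋₊ = n := ⟨_, rfl⟩
    have ht0 : 0 ≤ t / hs := div_nonneg ht hhs0.le
    have h1 : (n : ℝ) * hs ≤ t := by
      rw [← hn]
      calc ((⌊t / hs⌋₊ : ℝ)) * hs ≤ (t / hs) * hs :=
            mul_le_mul_of_nonneg_right (Nat.floor_le ht0) hhs0.le
        _ = t := div_mul_cancel₀ t (ne_of_gt hhs0)
    have h2 : t < ((n : ℝ) + 1) * hs := by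
      rw [← hn]
      have := Nat.lt_floor_add_one (t / hs)
      calc t = (t / hs) * hs := (div_mul_cancel₀ t (ne_of_gt hhs0)).symm
        _ < ((⌊t / hs⌋₊ : ℝ) + 1) * hs := by
            apply mul_lt_mul_of_pos_right _ hhs0
            exact this
    have heq : ((n : ℝ) + 1) * hs = (n : ℝ) * hs + hs := by ring
    rcases eq_or_lt_of_le h1 with hl | hl
    · -- t is a left endpoint
      cases n with
      | zero =>
        have ht00 : t = 0 := by simpa using hl.symm
        have hd1 := hpiece 0 t (by
          constructor
          · simp [ht00]
          · simp only [Nat.cast_zero, zero_mul, zero_add]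
            rw [ht00]; exact hhs0.le)
        refine hd1.mono_of_mem_nhdsWithin ?_
        simp only [Nat.cast_zero, zero_mul, zero_add]
        rw [ht00]
        exact Icc_mem_nhdsGE_of_mem ⟨le_refl _, hhs0⟩
      | succ m =>
        have htm : t = ((m : ℝ) + 1) * hs := by push_cast at hl; linarith
        have hdL := hpiece m t (by
          constructor
          · rw [htm]; nlinarith [hhs0.le]
          · rw [htm]; linarith)
        have hdR := hpiece (m + 1) t (by
          constructor
          · push_cast; linarith
          · push_cast; linarith)
        push_cast at hdR
        rw [show ((m : ℝ) + 1) * hs = (m : ℝ) * hs + hs from by ring] at hdR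
        have hun := hdL.union hdR
        rw [Set.Icc_union_Icc_eq_Icc (by linarith [hhs0.le]) (by linarith [hhs0.le])] at hun
        have : HasDerivAt u (F κ ν Bt Dt Mt (u t)) t := by
          apply hun.hasDerivAt
          apply Icc_mem_nhds
          · rw [htm]; push_cast; nlinarith [hhs0]
          · rw [htm]; push_cast; nlinarith [hhs0]
        exact this.hasDerivWithinAt
    · -- t is interior to piece n
      have hd := hpiece n t ⟨h1, by linarith [heq ▸ h2]⟩
      have : HasDerivAt u (F κ ν Bt Dt Mt (u t)) t := by
        apply hd.hasDerivAt
        apply Icc_mem_nhds hl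
        linarith [heq ▸ h2]
      exact this.hasDerivWithinAt

end Glue

end Trunc

/-- Existence and uniqueness for the `κ`-truncated forward equation (3.2): the truncated
system is a finite-dimensional ODE with locally Lipschitz right-hand side, so it has a
unique solution starting from any `ν ∈ M₁(ℕ₀^d)`. -/
theorem truncated_forward_equation_existence_uniqueness (d : ℕ) (hd : 0 < d) (κ : ℕ)
    (hκ : 0 < κ)
    (b dth : Fin d → (Fin d → ℕ) → ((Fin d → ℕ) → ℝ) → ℝ)
    (m : Fin d → Fin d → (Fin d → ℕ) → ((Fin d → ℕ) → ℝ) → ℝ)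
    (L : ℝ)
    -- the rates are nonnegative on ℓ¹(ℕ₀^d)
    (hb_nonneg : ∀ i y w, Summable w → 0 ≤ b i y w)
    (hd_nonneg : ∀ i y w, Summable w → 0 ≤ dth i y w)
    (hm_nonneg : ∀ i k y w, i ≠ k → Summable w → 0 ≤ m i k y w)
    -- vanishing conditions
    (hd_vanish : ∀ i y w, y i = 0 → dth i y w = 0)
    (hm_vanish : ∀ i k y w, i ≠ k → y i = 0 → m i k y w = 0)
    -- linear growth bound
    (hb_growth : ∀ i y w, Summable w → b i y w ≤ L * ((bullet y : ℝ) + 1))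
    (hd_growth : ∀ i y w, Summable w → dth i y w ≤ L * ((bullet y : ℝ) + 1))
    (hm_growth : ∀ i k y w, i ≠ k → Summable w → m i k y w ≤ L * ((bullet y : ℝ) + 1))
    -- Lipschitz bound in the ℓ¹ norm
    (hb_lip : ∀ i y w w', Summable w → Summable w' →
      |b i y w - b i y w'| ≤ L * ∑' x, |w x - w' x|)
    (hd_lip : ∀ i y w w', Summable w → Summable w' →
      |dth i y w - dth i y w'| ≤ L * ∑' x, |w x - w' x|)
    (hm_lip : ∀ i k y w w', i ≠ k → Summable w → Summable w' →
      |m i k y w - m i k y w'| ≤ L * ∑' x, |w x - w' x|)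
    (ν : (Fin d → ℕ) → ℝ) (hν : IsPMF ν) :
    ∃ v : ℝ → (Fin d → ℕ) → ℝ, IsTruncSolution κ b dth m ν v ∧
      ∀ w : ℝ → (Fin d → ℕ) → ℝ, IsTruncSolution κ b dth m ν w →
        ∀ t ≥ (0 : ℝ), w t = v t := by
    classical
  obtain ⟨hν0, hνhs⟩ := hν
  have hνsum : Summable ν := hνhs.summable
  -- L is nonnegative
  have hL : 0 ≤ L := by
    have h1 : 0 ≤ b ⟨0, hd⟩ (fun _ => 0) ν := hb_nonneg _ _ ν hνsum
    have h2 : b ⟨0, hd⟩ (fun _ => 0) ν ≤ L * ((bullet (fun _ => 0) : ℝ) + 1) :=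
      hb_growth _ _ ν hνsum
    have h3 : bullet (fun _ : Fin d => 0) = 0 := by simp [bullet]
    rw [h3] at h2
    push_cast at h2
    linarith
  have hM : (0:ℝ) ≤ L * ((κ : ℝ) + 1) := by positivity
  have hB : ∀ i, Trunc.RateBnd κ (L * ((κ : ℝ) + 1)) L (truncRate κ (b i)) :=
    fun i => Trunc.rateBnd_trunc hL (hb_nonneg i) (hb_growth i) (hb_lip i)
  have hD : ∀ i, Trunc.RateBnd κ (L * ((κ : ℝ) + 1)) L (truncRate κ (dth i)) :=
    fun i => Trunc.rateBnd_trunc hL (hd_nonneg i) (hd_growth i) (hd_lip i)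
  have hMt : ∀ i k, k ≠ i → Trunc.RateBnd κ (L * ((κ : ℝ) + 1)) L (truncRate κ (m i k)) :=
    fun i k hki => Trunc.rateBnd_trunc hL
      (fun y w hw => hm_nonneg i k y w (Ne.symm hki) hw)
      (fun y w hw => hm_growth i k y w (Ne.symm hki) hw)
      (fun y w w' hw hw' => hm_lip i k y w w' (Ne.symm hki) hw hw')
  obtain ⟨u, hu0, huD⟩ := Trunc.exists_global_sol hM hL hB hD hMt hνsum (fun p => ν p.1)
  refine ⟨fun t => Trunc.emb κ ν (u t), ⟨?_, ?_, ?_, ?_⟩, ?_⟩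
  · -- initial condition
    funext z
    by_cases h : bullet z ≤ κ
    · show Trunc.emb κ ν (u 0) z = ν z
      rw [Trunc.emb_eq_of_le h, hu0]
    · exact Trunc.emb_eq_of_gt h
  · -- summability
    intro t _
    exact Trunc.summable_emb hνsum (u t)
  · -- frozen states
    intro y hy t _
    exact Trunc.emb_eq_of_gt (not_le.2 hy)
  · -- the ODE
    intro y hy t ht
    have hder := hasDerivWithinAt_pi.1 (huD t ht) ⟨y, hy⟩
    have hfun : (fun s => Trunc.emb κ ν (u s) y) = (fun s => u s ⟨y, hy⟩) :=
      funext fun s => Trunc.emb_eq_of_le hy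
    show HasDerivWithinAt (fun s => Trunc.emb κ ν (u s) y) _ _ _
    rw [hfun]
    exact hder
  · -- uniqueness
    intro w hw t ht
    obtain ⟨hw0, hwsum, hwfroz, hwode⟩ := hw
    have ha : ∀ s, 0 ≤ s → Trunc.emb κ ν (fun p => w s p.1) = w s := by
      intro s hs
      funext z
      by_cases h : bullet z ≤ κ
      · exact Trunc.emb_eq_of_le h
      · rw [Trunc.emb_eq_of_gt h]
        exact (hwfroz z (not_le.1 h) s hs).symm
    have hwd : ∀ s, 0 ≤ s → HasDerivWithinAt (fun r p => w r p.1)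
        (Trunc.F κ ν (fun i => truncRate κ (b i)) (fun i => truncRate κ (dth i))
          (fun i k => truncRate κ (m i k)) (fun p => w s p.1)) (Set.Ici 0) s := by
      intro s hs
      rw [hasDerivWithinAt_pi]
      intro p
      have h1 := hwode p.1 p.2 s hs
      have h2 : fwdRHS (fun i => truncRate κ (b i)) (fun i => truncRate κ (dth i))
          (fun i k => truncRate κ (m i k)) w s p.1
          = Trunc.F κ ν (fun i => truncRate κ (b i)) (fun i => truncRate κ (dth i))
            (fun i k => truncRate κ (m i k)) (fun p => w s p.1) p := by
        show fwdRHS _ _ _ w s p.1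
          = fwdRHS _ _ _ (fun _ => Trunc.emb κ ν (fun p => w s p.1)) 0 p.1
        rw [ha s hs]
        rfl
      exact h2 ▸ h1
    -- continuity on [0, t]
    have hcu : ContinuousOn u (Set.Icc 0 t) := fun s hs' =>
      ((huD s hs'.1).continuousWithinAt).mono (fun x hx => hx.1)
    have hcw : ContinuousOn (fun r (p : {y : Fin d → ℕ // bullet y ≤ κ}) => w r p.1)
        (Set.Icc 0 t) := fun s hs' =>
      ((hwd s hs'.1).continuousWithinAt).mono (fun x hx => hx.1)
    obtain ⟨C₁, hC₁⟩ := isCompact_Icc.exists_bound_of_continuousOn hcu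
    obtain ⟨C₂, hC₂⟩ := isCompact_Icc.exists_bound_of_continuousOn hcw
    set ρ : ℝ := max (max C₁ C₂) 0 with hρ
    have hρ0 : 0 ≤ ρ := le_max_right _ _
    set K : ℝ := 2 * (d : ℝ) * ((d : ℝ) + 2) *
      ((L * ((κ : ℝ) + 1)) + ρ * (L * (Trunc.T d κ).card)) with hKdef
    have hK0 : 0 ≤ K := by
      have : (0:ℝ) ≤ ((Trunc.T d κ).card : ℝ) := Nat.cast_nonneg _
      rw [hKdef]; positivity
    have hlip : ∀ s : ℝ, LipschitzOnWith K.toNNReal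
        (fun x => Trunc.F κ ν (fun i => truncRate κ (b i)) (fun i => truncRate κ (dth i))
          (fun i k => truncRate κ (m i k)) x) (Metric.closedBall 0 ρ) := by
      intro s
      apply LipschitzOnWith.of_dist_le_mul
      intro x hx y hy
      rw [dist_eq_norm, dist_eq_norm, Real.coe_toNNReal _ hK0]
      exact Trunc.norm_F_sub_le hM hL hB hD hMt hνsum hρ0 x y
        (mem_closedBall_zero_iff.1 hy)
    have hEq := ODE_solution_unique_of_mem_Icc_right
      (v := fun _ x => Trunc.F κ ν (fun i => truncRate κ (b i)) (fun i => truncRate κ (dth i))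
        (fun i k => truncRate κ (m i k)) x)
      (s := fun _ => Metric.closedBall (0 : {y : Fin d → ℕ // bullet y ≤ κ} → ℝ) ρ)
      (f := fun r (p : {y : Fin d → ℕ // bullet y ≤ κ}) => w r p.1) (g := u) (a := 0) (b := t)
      (fun s _ => hlip s) hcw
      (fun s hs' => (hwd s hs'.1).mono (Set.Ici_subset_Ici.2 hs'.1))
      (fun s hs' => mem_closedBall_zero_iff.2
        ((hC₂ s ⟨hs'.1, hs'.2.le⟩).trans ((le_max_right C₁ C₂).trans (le_max_left _ _))))
      hcu
      (fun s hs' => (huD s hs'.1).mono (Set.Ici_subset_Ici.2 hs'.1))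
      (fun s hs' => mem_closedBall_zero_iff.2
        ((hC₁ s ⟨hs'.1, hs'.2.le⟩).trans ((le_max_left C₁ C₂).trans (le_max_left _ _))))
      (by
        funext p
        show w 0 p.1 = u 0 p
        rw [hw0, hu0])
    have hfin : (fun (p : {y : Fin d → ℕ // bullet y ≤ κ}) => w t p.1) = u t :=
      hEq ⟨ht, le_refl t⟩
    show w t = Trunc.emb κ ν (u t)
    funext z
    by_cases h : bullet z ≤ κ
    · rw [Trunc.emb_eq_of_le h]
      exact congrFun hfin ⟨z, h⟩
    · rw [Trunc.emb_eq_of_gt h]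
      exact hwfroz z (not_le.1 h) t ht
end
end

section
/- Equip the space of probability measures on ℕ₀^d with the topology of weak convergence, and define the stochastic domination partial order: μ ≼ ν if and only if for every m ∈ ℕ₀^d, μ({y ∈ ℕ₀^d : y_i ≥ m_i for all i}) ≤ ν({y ∈ ℕ₀^d : y_i ≥ m_i for all i}). If K is a compact subset of the probability measures on ℕ₀^d, then the set ⋃_{ν ∈ K} { μ : μ ≼ ν } = { μ : there exists ν ∈ K with μ ≼ ν } is also compact. -/
open MeasureTheory Topology Filter
open scoped ENNReal NNReal

variable {α : Type*} [MeasurableSpace α] [MeasurableSingletonClass α] [Countable α]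

lemma sum_smul_dirac_apply (p : α → ℝ≥0∞) (s : Set α) :
    Measure.sum (fun x => p x • Measure.dirac x) s = ∑' x : s, p x := by
  have hs : MeasurableSet s := s.to_countable.measurableSet
  rw [Measure.sum_apply _ hs, tsum_subtype s p]
  congr 1
  funext x
  by_cases hx : x ∈ s <;>
    simp [Measure.smul_apply, Measure.dirac_apply' _ hs, Set.indicator, hx]

omit [Countable α] in
lemma measure_finset_eq_sum (μ : Measure α) (s : Finset α) :
    μ ↑s = ∑ x ∈ s, μ {x} := by
  rw [show (↑s : Set α) = ⋃ x ∈ s, {x} by ext y; simp]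
  exact measure_biUnion_finset (by simp [Set.PairwiseDisjoint, Set.Pairwise])
    fun _ _ => measurableSet_singleton _

lemma tendsto_measure_finset {μs : ℕ → ProbabilityMeasure α} {p : α → ℝ≥0∞}
    (hp : ∀ x, Tendsto (fun n => (μs n : Measure α) {x}) atTop (𝓝 (p x)))
    (s : Finset α) :
    Tendsto (fun n => (μs n : Measure α) ↑s) atTop (𝓝 (∑ x ∈ s, p x)) := by
  simp only [measure_finset_eq_sum]
  exact tendsto_finset_sum s fun x _ => hp x

lemma tsum_le_liminf [DecidableEq α] {μs : ℕ → ProbabilityMeasure α} {p : α → ℝ≥0∞}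
    (hp : ∀ x, Tendsto (fun n => (μs n : Measure α) {x}) atTop (𝓝 (p x)))
    (u : Set α) :
    (∑' x : u, p x) ≤ atTop.liminf (fun n => (μs n : Measure α) u) := by
  rw [ENNReal.tsum_eq_iSup_sum]
  refine iSup_le fun s => ?_
  set t : Finset α := s.image Subtype.val with ht
  have hsum : ∑ x ∈ s, p x.val = ∑ y ∈ t, p y :=
    (Finset.sum_image (by intro a _ b _ h; exact Subtype.val_injective h)).symm
  rw [hsum]
  have h1 : atTop.liminf (fun n => (μs n : Measure α) ↑t) = ∑ y ∈ t, p y :=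
    (tendsto_measure_finset hp t).liminf_eq
  rw [← h1]
  refine liminf_le_liminf (Eventually.of_forall fun n => measure_mono ?_)
  intro y hy
  simp only [ht, Finset.coe_image, Set.mem_image, Finset.mem_coe] at hy
  obtain ⟨⟨z, hz⟩, _, rfl⟩ := hy
  exact hz


noncomputable section

/-- Stochastic domination of probability measures on `ℕ₀^d`: `μ ≼ ν` iff `μ` assigns no
more mass than `ν` to every upper set `{y : ∀ i, m i ≤ y i}`. -/
def StochDom {d : ℕ} (μ ν : ProbabilityMeasure (Fin d → ℕ)) : Prop :=
  ∀ m : Fin d → ℕ,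
    μ {y : Fin d → ℕ | ∀ i, m i ≤ y i} ≤ ν {y : Fin d → ℕ | ∀ i, m i ≤ y i}

/-- If `K` is a compact set of probability measures on `ℕ₀^d` (with the topology of weak
convergence), then the set of probability measures stochastically dominated by some
element of `K` is also compact. -/
theorem isCompact_stochDom_below (d : ℕ) (hd : 0 < d)
    (K : Set (ProbabilityMeasure (Fin d → ℕ))) (hK : IsCompact K) :
    IsCompact {μ : ProbabilityMeasure (Fin d → ℕ) | ∃ ν ∈ K, StochDom μ ν} := by
  classical
  letI : MetricSpace (ProbabilityMeasure (Fin d → ℕ)) :=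
    TopologicalSpace.metrizableSpaceMetric _
  rw [isCompact_iff_isSeqCompact]
  intro μs hμs
  choose νs hνsK hdom using hμs
  obtain ⟨ν₀, hν₀K, φ, hφ, hφt⟩ := hK.isSeqCompact hνsK
  obtain ⟨p, -, ψ, hψ, hψt⟩ :=
    (isCompact_univ (X := (Fin d → ℕ) → ℝ≥0∞)).tendsto_subseq
      (x := fun n x => (μs (φ n) : Measure (Fin d → ℕ)) {x}) (fun n => Set.mem_univ _)
  set σ : ℕ → ℕ := φ ∘ ψ with hσdef
  have hσ : StrictMono σ := hφ.comp hψ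
  have hσν : Tendsto (fun n => νs (σ n)) atTop (𝓝 ν₀) := hφt.comp hψ.tendsto_atTop
  have hp : ∀ x, Tendsto (fun n => (μs (σ n) : Measure (Fin d → ℕ)) {x}) atTop (𝓝 (p x)) := by
    intro x
    exact (tendsto_pi_nhds.mp hψt) x
  set M : Measure (Fin d → ℕ) := Measure.sum (fun x => p x • Measure.dirac x) with hM
  -- domination in ℝ≥0∞
  have hdomE : ∀ n (m : Fin d → ℕ),
      (μs n : Measure (Fin d → ℕ)) {y | ∀ i, m i ≤ y i}
        ≤ (νs n : Measure (Fin d → ℕ)) {y | ∀ i, m i ≤ y i} := by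
    intro n m
    have h := hdom n m
    rw [← ENNReal.coe_le_coe] at h
    simpa [ProbabilityMeasure.ennreal_coeFn_eq_coeFn_toMeasure] using h
  -- key limsup bound
  have key : ∀ m : Fin d → ℕ,
      M {y | ∀ i, m i ≤ y i} ≤ (ν₀ : Measure (Fin d → ℕ)) {y | ∀ i, m i ≤ y i} := by
    intro m
    rw [hM, sum_smul_dirac_apply]
    refine le_trans (tsum_le_liminf hp _) ?_
    refine le_trans (liminf_le_liminf (Eventually.of_forall fun n => hdomE (σ n) m)) ?_
    refine le_trans liminf_le_limsup ?_
    exact ProbabilityMeasure.limsup_measure_closed_le_of_tendsto hσν (isClosed_discrete _)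
  -- upper bound by 1
  have hMle : ∀ u : Set (Fin d → ℕ), M u ≤ 1 := by
    intro u
    rw [hM, sum_smul_dirac_apply]
    refine le_trans (tsum_le_liminf hp u) ?_
    refine le_trans (liminf_le_liminf
      (Eventually.of_forall fun n => measure_mono (Set.subset_univ u))) ?_
    simp only [measure_univ]
    exact le_of_eq (liminf_const (1:ℝ≥0∞))
  have hMuniv : M Set.univ = 1 := by
    refine le_antisymm (hMle _) ?_
    refine ENNReal.le_of_forall_pos_le_add fun ε hε _ => ?_
    set δ : ℝ≥0 := ε / d with hδdef
    have hδ : 0 < δ := div_pos hε (by exact_mod_cast hd)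
    have tail : ∀ i : Fin d, ∃ N : ℕ,
        (ν₀ : Measure (Fin d → ℕ)) {y | N ≤ y i} < (δ : ℝ≥0∞) := by
      intro i
      have hanti : Antitone (fun N : ℕ => {y : Fin d → ℕ | N ≤ y i}) := by
        intro a b hab y hy
        exact le_trans hab hy
      have hdec : Tendsto (fun N : ℕ => (ν₀ : Measure (Fin d → ℕ)) {y | N ≤ y i}) atTop
          (𝓝 ((ν₀ : Measure (Fin d → ℕ)) (⋂ N : ℕ, {y | N ≤ y i}))) :=
        tendsto_measure_iInter_atTop (fun N => (Set.to_countable _).measurableSet.nullMeasurableSet)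
          hanti ⟨0, measure_ne_top _ _⟩
      have hempty : (⋂ N : ℕ, {y : Fin d → ℕ | N ≤ y i}) = ∅ := by
        ext y
        simp only [Set.mem_iInter, Set.mem_setOf_eq, Set.mem_empty_iff_false, iff_false, not_forall]
        exact ⟨y i + 1, by omega⟩
      rw [hempty, measure_empty] at hdec
      exact (hdec.eventually_lt_const (show (0:ℝ≥0∞) < δ from ENNReal.coe_pos.2 hδ)).exists
    choose Nf hNf using tail
    set N : ℕ := Finset.univ.sup Nf with hNdef
    have hν₀A : ∀ i, (ν₀ : Measure (Fin d → ℕ)) {y | N ≤ y i} < (δ:ℝ≥0∞) := by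
      intro i
      have hsub : {y : Fin d → ℕ | N ≤ y i} ⊆ {y : Fin d → ℕ | Nf i ≤ y i} :=
        fun y (hy : N ≤ y i) => le_trans (Finset.le_sup (f := Nf) (Finset.mem_univ i)) hy
      exact lt_of_le_of_lt (measure_mono hsub) (hNf i)
    have hev : ∀ᶠ n in atTop, ∀ i : Fin d,
        (νs (σ n) : Measure (Fin d → ℕ)) {y | N ≤ y i} < (δ:ℝ≥0∞) := by
      rw [eventually_all]
      intro i
      refine Filter.eventually_lt_of_limsup_lt ?_
      exact lt_of_le_of_lt
        (ProbabilityMeasure.limsup_measure_closed_le_of_tendsto hσν (isClosed_discrete _))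
        (hν₀A i)
    have hBfin : ({y : Fin d → ℕ | ∀ i, y i < N}).Finite := by
      have heq : {y : Fin d → ℕ | ∀ i, y i < N} = Set.pi Set.univ (fun _ => Set.Iio N) := by
        ext y
        simp [Set.mem_pi]
      rw [heq]
      exact Set.Finite.pi fun _ => Set.finite_Iio N
    set t : Finset (Fin d → ℕ) := hBfin.toFinset with htdef
    have htB : (↑t : Set (Fin d → ℕ)) = {y | ∀ i, y i < N} := hBfin.coe_toFinset
    have hdsum : (∑ _i : Fin d, (δ:ℝ≥0∞)) ≤ (ε:ℝ≥0∞) := by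
      rw [Finset.sum_const, Finset.card_univ, Fintype.card_fin, nsmul_eq_mul, hδdef]
      rw [show ((d:ℝ≥0∞)) = ((d:ℝ≥0):ℝ≥0∞) by simp]
      rw [← ENNReal.coe_mul]
      refine ENNReal.coe_le_coe.2 ?_
      rw [mul_comm, div_mul_cancel₀]
      exact_mod_cast hd.ne'
    have hstep : ∀ᶠ n in atTop,
        (1:ℝ≥0∞) ≤ (μs (σ n) : Measure (Fin d → ℕ)) ↑t + (ε:ℝ≥0∞) := by
      filter_upwards [hev] with n hn
      have hAi : ∀ i, (μs (σ n) : Measure (Fin d → ℕ)) {y | N ≤ y i}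
          ≤ (νs (σ n) : Measure (Fin d → ℕ)) {y | N ≤ y i} := by
        intro i
        have h := hdomE (σ n) (fun j => if j = i then N else 0)
        have hset : {y : Fin d → ℕ | ∀ j, (if j = i then N else 0) ≤ y j}
            = {y | N ≤ y i} := by
          ext y
          constructor
          · intro h'
            simpa using h' i
          · intro h' j
            by_cases hj : j = i <;> simp [hj, Set.mem_setOf_eq.mp h']
        rwa [hset] at h
      have hcover : (Set.univ : Set (Fin d → ℕ))
          ⊆ ↑t ∪ ⋃ i, {y | N ≤ y i} := by
        intro y _
        by_cases hy : ∀ i, y i < N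
        · left
          rw [htB]
          exact hy
        · right
          push_neg at hy
          obtain ⟨i, hi⟩ := hy
          exact Set.mem_iUnion.2 ⟨i, hi⟩
      calc (1:ℝ≥0∞) = (μs (σ n) : Measure (Fin d → ℕ)) Set.univ := measure_univ.symm
        _ ≤ (μs (σ n) : Measure (Fin d → ℕ)) (↑t ∪ ⋃ i, {y | N ≤ y i}) :=
            measure_mono hcover
        _ ≤ (μs (σ n) : Measure (Fin d → ℕ)) ↑t
            + (μs (σ n) : Measure (Fin d → ℕ)) (⋃ i, {y | N ≤ y i}) := measure_union_le _ _
        _ ≤ (μs (σ n) : Measure (Fin d → ℕ)) ↑t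
            + ∑ i : Fin d, (μs (σ n) : Measure (Fin d → ℕ)) {y | N ≤ y i} := by
            gcongr
            exact measure_iUnion_fintype_le _ _
        _ ≤ (μs (σ n) : Measure (Fin d → ℕ)) ↑t + ∑ _i : Fin d, (δ:ℝ≥0∞) := by
            gcongr with i
            exact le_trans (hAi i) (hn i).le
        _ ≤ (μs (σ n) : Measure (Fin d → ℕ)) ↑t + (ε:ℝ≥0∞) := by gcongr
    have hlim : Tendsto (fun n => (μs (σ n) : Measure (Fin d → ℕ)) ↑t + (ε:ℝ≥0∞)) atTop
        (𝓝 (∑ x ∈ t, p x + (ε:ℝ≥0∞))) := (tendsto_measure_finset hp t).add tendsto_const_nhds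
    have h1 : (1:ℝ≥0∞) ≤ ∑ x ∈ t, p x + (ε:ℝ≥0∞) := ge_of_tendsto hlim hstep
    refine le_trans h1 (add_le_add_left ?_ _)
    calc ∑ x ∈ t, p x ≤ ∑' x, p x := ENNReal.sum_le_tsum t
      _ = M Set.univ := by
          rw [hM, sum_smul_dirac_apply]
          exact (tsum_univ p).symm
  have hMP : IsProbabilityMeasure M := ⟨hMuniv⟩
  set P : ProbabilityMeasure (Fin d → ℕ) := ⟨M, hMP⟩ with hPdef
  have hPdom : StochDom P ν₀ := by
    intro m
    rw [← ENNReal.coe_le_coe]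
    simp only [ProbabilityMeasure.ennreal_coeFn_eq_coeFn_toMeasure]
    exact key m
  have hPtend : Tendsto (fun n => μs (σ n)) atTop (𝓝 P) := by
    refine tendsto_of_forall_isOpen_le_liminf fun G hG => ?_
    have hE : (P : Measure (Fin d → ℕ)) G
        ≤ atTop.liminf fun n => (μs (σ n) : Measure (Fin d → ℕ)) G := by
      rw [show (P : Measure (Fin d → ℕ)) = M from rfl, hM, sum_smul_dirac_apply]
      exact tsum_le_liminf hp G
    have aux : (ENNReal.ofNNReal (atTop.liminf fun n => μs (σ n) G)) =
        atTop.liminf (fun n => ((μs (σ n) G : ℝ≥0) : ℝ≥0∞)) := by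
      refine Monotone.map_liminf_of_continuousAt (F := atTop) ENNReal.coe_mono
        (fun n => μs (σ n) G) ?_ ?_ ?_
      · exact ENNReal.continuous_coe.continuousAt
      · exact IsBoundedUnder.isCoboundedUnder_ge ⟨1, by simp⟩
      · exact ⟨0, by simp⟩
    rw [← ENNReal.coe_le_coe, aux]
    simpa only [ProbabilityMeasure.ennreal_coeFn_eq_coeFn_toMeasure] using hE
  exact ⟨P, ⟨ν₀, hν₀K, hPdom⟩, σ, hσ, hPtend⟩
end
end

section
/- Let d ∈ ℕ, λ ∈ [0,∞)^d, let Γ ∈ ℝ^{d×d} satisfy Γ_{ik} ≥ 0 for i ≠ k and ∑_{k} Γ_{ik} = 0 for each i, and let μ̃ : ℝ^d → [0,∞)^d be continuous. Suppose v : [0,∞) → M₁(ℕ₀^d) has every coordinate t ↦ v_{y}(t) differentiable and satisfies, for all y ∈ ℕ₀^d and t ≥ 0, the forward equation v_{y}'(t) = −v_{y}(t) ∑_{i=1}^d ( y_i λ_i + y_i μ̃_i(r(t)) + ∑_{k≠i} y_i Γ_{ik} ) + ∑_{i=1}^d ( (y_i−1) λ_i v_{y−e_i}(t) + (y_i+1)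 μ̃_i(r(t)) v_{y+e_i}(t) + ∑_{k≠i} (y_i+1) Γ_{ik} v_{y−e_k+e_i}(t) ) (terms indexed by vectors with a negative coordinate being zero), where r_i(t) := ∑_{y ∈ ℕ₀^d} y_i v_{y}(t). Assume in addition that for every t ≥ 0 the second moment ∑_{y} (y_•)² v_{y}(t) is finite, and that each r_i is differentiable with r_i'(t) = ∑_{y} y_i v_{y}'(t). Then r satisfies the nonlinear moment equation r_i'(t) = ( λ_i − μ̃_i(r(t)) ) r_i(t) + ∑_{j=1}^d Γ_{ji} r_j(t) for all i ∈ {1,…,d} and t ≥ 0. -/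
open scoped BigOperators

noncomputable section

/-- The expected state vector (first moment) `r[v(t)]_i = ∑_y y_i v_y(t)`. -/
def momentVec {d : ℕ} (v : ℝ → (Fin d → ℕ) → ℝ) (t : ℝ) : Fin d → ℝ :=
  fun i => ∑' y : Fin d → ℕ, (y i : ℝ) * v t y

/-- The right-hand side of the limiting forward equation (2.2) specialized to the simple
MTBDP with moment-mediated mean-field interaction: birth rates `y_i λ_i`, death rates
`y_i μ̃_i(r[v(t)])`, and mutation rates `y_i Γ_{ik}`; terms indexed by vectors with a
negative coordinate are zero. -/
def mfRHS {d : ℕ} (lam : Fin d → ℝ) (Γ : Fin d → Fin d → ℝ)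
    (mu : (Fin d → ℝ) → Fin d → ℝ)
    (v : ℝ → (Fin d → ℕ) → ℝ) (t : ℝ) (y : Fin d → ℕ) : ℝ :=
  -(v t y) * (∑ i, ((y i : ℝ) * lam i + (y i : ℝ) * mu (momentVec v t) i +
      ∑ k ∈ Finset.univ.filter (fun k => k ≠ i), (y i : ℝ) * Γ i k))
    + ∑ i,
      ((if y i = 0 then 0 else ((y i : ℝ) - 1) * lam i * v t (y - eVec i))
        + ((y i : ℝ) + 1) * mu (momentVec v t) i * v t (y + eVec i)
        + ∑ k ∈ Finset.univ.filter (fun k => k ≠ i),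
            (if y k = 0 then 0 else
              ((y i : ℝ) + 1) * Γ i k * v t (y - eVec k + eVec i)))


lemma eVec_apply {d : ℕ} (i l : Fin d) : eVec i l = if l = i then 1 else 0 := by
  simp [eVec, Pi.single_apply]

lemma add_eVec_apply {d : ℕ} (j : Fin d) (z : Fin d → ℕ) (l : Fin d) :
    (z + eVec j) l = z l + if l = j then 1 else 0 := by
  simp [Pi.add_apply, eVec_apply]

lemma add_eVec_cast {d : ℕ} (j : Fin d) (z : Fin d → ℕ) (l : Fin d) :
    (((z + eVec j) l : ℕ) : ℝ) = (z l : ℝ) + if l = j then 1 else 0 := by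
  rw [add_eVec_apply]; split_ifs <;> push_cast <;> ring

lemma coord_le_bullet {d : ℕ} (y : Fin d → ℕ) (l : Fin d) : ((y l : ℝ)) ≤ (bullet y : ℝ) := by
  have : y l ≤ bullet y := Finset.single_le_sum (fun i _ => Nat.zero_le (y i)) (Finset.mem_univ l)
  exact_mod_cast this

lemma summable_quad {d : ℕ} (V : (Fin d → ℕ) → ℝ) (hV0 : ∀ y, 0 ≤ V y)
    (M2 : Summable fun y : Fin d → ℕ => ((bullet y : ℝ))^2 * V y)
    (hSV : Summable V) : Summable (fun y : Fin d → ℕ =>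
    (((bullet y : ℝ))^2 + (bullet y : ℝ) + 1) * V y) := by
  have hb : Summable (fun y : Fin d → ℕ => (bullet y : ℝ) * V y) := by
    refine Summable.of_nonneg_of_le
      (fun y => mul_nonneg (Nat.cast_nonneg _) (hV0 y))
      (fun y => ?_) (M2.add hSV)
    have h1 : (0:ℝ) ≤ (bullet y : ℝ) := Nat.cast_nonneg _
    nlinarith [hV0 y, sq_nonneg ((bullet y : ℝ) - 1)]
  exact ((M2.add hb).add hSV).congr (fun y => by ring)

lemma summable_dom {d : ℕ} (V : (Fin d → ℕ) → ℝ) (hV0 : ∀ y, 0 ≤ V y)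
    (M2 : Summable fun y : Fin d → ℕ => ((bullet y : ℝ))^2 * V y)
    (hSV : Summable V) (f : (Fin d → ℕ) → ℝ) (c : ℝ)
    (hf : ∀ y, |f y| ≤ c * ((((bullet y : ℝ))^2 + (bullet y : ℝ) + 1) * V y)) :
    Summable f := by
  refine Summable.of_norm_bounded ((summable_quad V hV0 M2 hSV).mul_left c) (fun y => hf y)

lemma summable_coeff {d : ℕ} (V : (Fin d → ℕ) → ℝ) (hV0 : ∀ y, 0 ≤ V y)
    (M2 : Summable fun y : Fin d → ℕ => ((bullet y : ℝ))^2 * V y)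
    (hSV : Summable V) (a a' c : ℝ) (ha : |a| ≤ 1) (ha' : |a'| ≤ 1) (i j : Fin d) :
    Summable (fun y : Fin d → ℕ => ((y i : ℝ) + a) * ((y j : ℝ) + a') * c * V y) := by
  refine summable_dom V hV0 M2 hSV _ (2 * |c|) (fun y => ?_)
  have hi := coord_le_bullet y i
  have hj := coord_le_bullet y j
  have hb : (0:ℝ) ≤ (bullet y : ℝ) := Nat.cast_nonneg _
  have h0i : (0:ℝ) ≤ (y i : ℝ) := Nat.cast_nonneg _
  have h0j : (0:ℝ) ≤ (y j : ℝ) := Nat.cast_nonneg _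
  have hV := hV0 y
  have habs : |((y i : ℝ) + a) * ((y j : ℝ) + a') * c * V y|
      = |(y i : ℝ) + a| * |(y j : ℝ) + a'| * |c| * V y := by
    rw [abs_mul, abs_mul, abs_mul, abs_of_nonneg hV]
  rw [habs]
  have h1 : |(y i : ℝ) + a| ≤ (bullet y : ℝ) + 1 := by
    rw [abs_le]; constructor <;> [nlinarith [abs_le.1 ha]; nlinarith [abs_le.1 ha]]
  have h2 : |(y j : ℝ) + a'| ≤ (bullet y : ℝ) + 1 := by
    rw [abs_le]; constructor <;> [nlinarith [abs_le.1 ha']; nlinarith [abs_le.1 ha']]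
  have hc : (0:ℝ) ≤ |c| := abs_nonneg c
  have h3 : |(y i : ℝ) + a| * |(y j : ℝ) + a'| ≤ ((bullet y : ℝ) + 1) * ((bullet y : ℝ) + 1) :=
    mul_le_mul h1 h2 (abs_nonneg _) (by linarith)
  have h4 : ((bullet y : ℝ) + 1) * ((bullet y : ℝ) + 1)
      ≤ 2 * (((bullet y : ℝ))^2 + (bullet y : ℝ) + 1) := by nlinarith
  calc |(y i : ℝ) + a| * |(y j : ℝ) + a'| * |c| * V y
      = (|(y i : ℝ) + a| * |(y j : ℝ) + a'|) * (|c| * V y) := by ring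
    _ ≤ (2 * (((bullet y : ℝ))^2 + (bullet y : ℝ) + 1)) * (|c| * V y) :=
        mul_le_mul_of_nonneg_right (h3.trans h4) (mul_nonneg hc hV)
    _ = 2 * |c| * ((((bullet y : ℝ))^2 + (bullet y : ℝ) + 1) * V y) := by ring


-- transfer lemma test
lemma sub_add_eVec {d : ℕ} (j : Fin d) (y : Fin d → ℕ) (h : y j ≠ 0) :
    y - eVec j + eVec j = y := by
  funext l
  simp only [Pi.add_apply, Pi.sub_apply, eVec_apply]
  by_cases hl : l = j
  · subst hl; simp [Nat.sub_add_cancel (Nat.one_le_iff_ne_zero.2 h)]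
  · simp [hl]

lemma add_sub_eVec {d : ℕ} (j : Fin d) (z : Fin d → ℕ) : z + eVec j - eVec j = z := by
  funext l; simp [Pi.sub_apply]

lemma shift_hasSum {d : ℕ} (j : Fin d) (f : (Fin d → ℕ) → ℝ)
    (h0 : ∀ y, y j = 0 → f y = 0) (a : ℝ) :
    HasSum f a ↔ HasSum (fun z => f (z + eVec j)) a := by
  refine hasSum_iff_hasSum_of_ne_zero_bij (fun x => (x : Fin d → ℕ) + eVec j) ?_ ?_ ?_
  · intro x y h; exact Subtype.ext (add_left_injective _ h)
  · intro y hy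
    have hyj : y j ≠ 0 := fun h => hy (h0 y h)
    refine ⟨⟨y - eVec j, ?_⟩, sub_add_eVec j y hyj⟩
    simp only [Function.mem_support]
    rw [sub_add_eVec j y hyj]; exact hy
  · intro x; rfl

lemma transfer {d : ℕ} (j : Fin d) (f g : (Fin d → ℕ) → ℝ)
    (h0 : ∀ y, y j = 0 → f y = 0) (hfg : ∀ z, f (z + eVec j) = g z) :
    (Summable f ↔ Summable g) ∧ (∑' y, f y) = ∑' z, g z := by
  have hco : (fun z => f (z + eVec j)) = g := funext hfg
  have hss : Summable f ↔ Summable g := by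
    constructor
    · intro h; exact hco ▸ (exists_congr (fun a => shift_hasSum j f h0 a)).1 h
    · intro h; exact (exists_congr (fun a => shift_hasSum j f h0 a)).2 (hco ▸ h)
  refine ⟨hss, ?_⟩
  by_cases hs : Summable f
  · exact (hco ▸ ((shift_hasSum j f h0 _).1 hs.hasSum)).tsum_eq.symm
  · rw [tsum_eq_zero_of_not_summable hs, tsum_eq_zero_of_not_summable (hss.not.1 hs)]

section terms
variable {d : ℕ}

def dlt (i j : Fin d) : ℝ := if i = j then 1 else 0

lemma dlt_abs (i j : Fin d) : |dlt i j| ≤ 1 := by unfold dlt; split_ifs <;> norm_num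

lemma dlt_self (j : Fin d) : dlt j j = 1 := by simp [dlt]

def fB (V : (Fin d → ℕ) → ℝ) (c : ℝ) (i j : Fin d) (y : Fin d → ℕ) : ℝ :=
  if y j = 0 then 0 else (y i : ℝ) * ((y j : ℝ) - 1) * c * V (y - eVec j)
def gB (V : (Fin d → ℕ) → ℝ) (c : ℝ) (i j : Fin d) (z : Fin d → ℕ) : ℝ :=
  ((z i : ℝ) + dlt i j) * (z j : ℝ) * c * V z
def fD (V : (Fin d → ℕ) → ℝ) (c : ℝ) (i j : Fin d) (y : Fin d → ℕ) : ℝ :=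
  (y i : ℝ) * ((y j : ℝ) + 1) * c * V (y + eVec j)
def hD (V : (Fin d → ℕ) → ℝ) (c : ℝ) (i j : Fin d) (w : Fin d → ℕ) : ℝ :=
  ((w i : ℝ) - dlt i j) * (w j : ℝ) * c * V w
def fM (V : (Fin d → ℕ) → ℝ) (c : ℝ) (i j k : Fin d) (y : Fin d → ℕ) : ℝ :=
  if y k = 0 then 0 else (y i : ℝ) * ((y j : ℝ) + 1) * c * V (y - eVec k + eVec j)
def pM (V : (Fin d → ℕ) → ℝ) (c : ℝ) (i j k : Fin d) (z : Fin d → ℕ) : ℝ :=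
  ((z i : ℝ) + dlt i k) * ((z j : ℝ) + 1) * c * V (z + eVec j)
def hM (V : (Fin d → ℕ) → ℝ) (c : ℝ) (i j k : Fin d) (w : Fin d → ℕ) : ℝ :=
  ((w i : ℝ) + dlt i k - dlt i j) * (w j : ℝ) * c * V w
def outT (V : (Fin d → ℕ) → ℝ) (c : ℝ) (i j : Fin d) (y : Fin d → ℕ) : ℝ :=
  (y i : ℝ) * (y j : ℝ) * c * V y

lemma add_eVec_self_ne (j : Fin d) (z : Fin d → ℕ) : (z + eVec j) j ≠ 0 := by
  rw [add_eVec_apply]; simp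

lemma transfer_B (V : (Fin d → ℕ) → ℝ) (c : ℝ) (i j : Fin d) :
    (Summable (fB V c i j) ↔ Summable (gB V c i j)) ∧
      (∑' y, fB V c i j y) = ∑' z, gB V c i j z := by
  refine transfer j _ _ (fun y hy => by simp [fB, hy]) (fun z => ?_)
  unfold fB gB
  rw [if_neg (add_eVec_self_ne j z), add_sub_eVec, add_eVec_cast, add_eVec_cast]
  simp only [dlt, eq_self_iff_true, if_true]
  ring

lemma transfer_D (V : (Fin d → ℕ) → ℝ) (c : ℝ) (i j : Fin d) :
    (Summable (hD V c i j) ↔ Summable (fD V c i j)) ∧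
      (∑' y, hD V c i j y) = ∑' z, fD V c i j z := by
  refine transfer j _ _ (fun y hy => by simp [hD, hy]) (fun z => ?_)
  unfold hD fD
  rw [add_eVec_cast, add_eVec_cast]
  simp only [dlt, eq_self_iff_true, if_true]
  ring

lemma transfer_M1 (V : (Fin d → ℕ) → ℝ) (c : ℝ) (i j k : Fin d) :
    (Summable (hM V c i j k) ↔ Summable (pM V c i j k)) ∧
      (∑' y, hM V c i j k y) = ∑' z, pM V c i j k z := by
  refine transfer j _ _ (fun y hy => by simp [hM, hy]) (fun z => ?_)
  unfold hM pM
  rw [add_eVec_cast, add_eVec_cast]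
  simp only [dlt, eq_self_iff_true, if_true]
  ring

lemma transfer_M2 (V : (Fin d → ℕ) → ℝ) (c : ℝ) (i j k : Fin d) (hk : k ≠ j) :
    (Summable (fM V c i j k) ↔ Summable (pM V c i j k)) ∧
      (∑' y, fM V c i j k y) = ∑' z, pM V c i j k z := by
  refine transfer k _ _ (fun y hy => by simp [fM, hy]) (fun z => ?_)
  unfold fM pM
  rw [if_neg (add_eVec_self_ne k z), add_sub_eVec, add_eVec_cast, add_eVec_cast]
  simp only [dlt, if_neg (Ne.symm hk)]
  ring

end terms

section sums
variable {d : ℕ} (V : (Fin d → ℕ) → ℝ) (hV0 : ∀ y, 0 ≤ V y)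
  (M2 : Summable fun y : Fin d → ℕ => ((bullet y : ℝ))^2 * V y)
  (hSV : Summable V)
include hV0 M2 hSV

lemma summable_outT (c : ℝ) (i j : Fin d) : Summable (outT V c i j) :=
  (summable_coeff V hV0 M2 hSV 0 0 c (by norm_num) (by norm_num) i j).congr
    (fun y => by unfold outT; ring)

lemma summable_gB (c : ℝ) (i j : Fin d) : Summable (gB V c i j) :=
  (summable_coeff V hV0 M2 hSV (dlt i j) 0 c (dlt_abs i j) (by norm_num) i j).congr
    (fun y => by unfold gB; ring)

lemma summable_hD (c : ℝ) (i j : Fin d) : Summable (hD V c i j) :=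
  (summable_coeff V hV0 M2 hSV (-(dlt i j)) 0 c (by rw [abs_neg]; exact dlt_abs i j)
    (by norm_num) i j).congr (fun y => by unfold hD; ring)

lemma summable_hM (c : ℝ) (i j k : Fin d) : Summable (hM V c i j k) := by
  refine (summable_coeff V hV0 M2 hSV (dlt i k - dlt i j) 0 c ?_ (by norm_num) i j).congr
    (fun y => by unfold hM; ring)
  unfold dlt; split_ifs <;> norm_num

-- the three bracket tsum computations
lemma TB (c : ℝ) (i j : Fin d) :
    ∑' y, (fB V c i j y - outT V c i j y) = (dlt i j * c) * ∑' y : Fin d → ℕ, (y j : ℝ) * V y := by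
  obtain ⟨hiff, heq⟩ := transfer_B V c i j
  have sgB := summable_gB V hV0 M2 hSV c i j
  have sfB := hiff.2 sgB
  have sout := summable_outT V hV0 M2 hSV c i j
  rw [Summable.tsum_sub sfB sout, heq, ← Summable.tsum_sub sgB sout,
    tsum_congr (f := fun y => gB V c i j y - outT V c i j y)
      (g := fun y => (dlt i j * c) * ((y j : ℝ) * V y))
      (fun y => by unfold gB outT; ring), tsum_mul_left]

lemma TD (c : ℝ) (i j : Fin d) :
    ∑' y, (fD V c i j y - outT V c i j y)
      = (-(dlt i j * c)) * ∑' y : Fin d → ℕ, (y j : ℝ) * V y := by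
  obtain ⟨hiff, heq⟩ := transfer_D V c i j
  have shD := summable_hD V hV0 M2 hSV c i j
  have sfD := hiff.1 shD
  have sout := summable_outT V hV0 M2 hSV c i j
  rw [Summable.tsum_sub sfD sout, ← heq, ← Summable.tsum_sub shD sout,
    tsum_congr (f := fun y => hD V c i j y - outT V c i j y)
      (g := fun y => (-(dlt i j * c)) * ((y j : ℝ) * V y))
      (fun y => by unfold hD outT; ring), tsum_mul_left]

lemma TM (c : ℝ) (i j k : Fin d) (hk : k ≠ j) :
    ∑' y, (fM V c i j k y - outT V c i j y)
      = ((dlt i k - dlt i j) * c) * ∑' y : Fin d → ℕ, (y j : ℝ) * V y := by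
  obtain ⟨hiff1, heq1⟩ := transfer_M1 V c i j k
  obtain ⟨hiff2, heq2⟩ := transfer_M2 V c i j k hk
  have shM := summable_hM V hV0 M2 hSV c i j k
  have spM := hiff1.1 shM
  have sfM := hiff2.2 spM
  have sout := summable_outT V hV0 M2 hSV c i j
  rw [Summable.tsum_sub sfM sout, heq2, ← heq1, ← Summable.tsum_sub shM sout,
    tsum_congr (f := fun y => hM V c i j k y - outT V c i j y)
      (g := fun y => ((dlt i k - dlt i j) * c) * ((y j : ℝ) * V y))
      (fun y => by unfold hM outT; ring), tsum_mul_left]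

-- summability of the brackets (needed for interchanging tsum and finite sums)
lemma summable_fB (c : ℝ) (i j : Fin d) : Summable (fB V c i j) :=
  (transfer_B V c i j).1.2 (summable_gB V hV0 M2 hSV c i j)
lemma summable_fD (c : ℝ) (i j : Fin d) : Summable (fD V c i j) :=
  (transfer_D V c i j).1.1 (summable_hD V hV0 M2 hSV c i j)
lemma summable_fM (c : ℝ) (i j k : Fin d) (hk : k ≠ j) : Summable (fM V c i j k) :=
  (transfer_M2 V c i j k hk).1.2 ((transfer_M1 V c i j k).1.1 (summable_hM V hV0 M2 hSV c i j k))

end sums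

lemma final_algebra {d : ℕ} (lam m R : Fin d → ℝ) (Γ : Fin d → Fin d → ℝ)
    (hΓ_row : ∀ i, ∑ k, Γ i k = 0) (i : Fin d) :
    ∑ j, (dlt i j * lam j * R j + -(dlt i j * m j) * R j +
        ∑ k ∈ Finset.univ.filter (fun k => k ≠ j), ((dlt i k - dlt i j) * Γ j k) * R j)
      = (lam i - m i) * R i + ∑ j, Γ j i * R j := by
  rw [Finset.sum_add_distrib, Finset.sum_add_distrib]
  have h1 : ∑ j, dlt i j * lam j * R j = lam i * R i := by
    simp [dlt, ite_mul, Finset.sum_ite_eq]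
  have h2 : ∑ j, -(dlt i j * m j) * R j = -(m i * R i) := by
    simp [dlt, ite_mul, Finset.sum_ite_eq, neg_mul]
  have h3 : ∑ j, ∑ k ∈ Finset.univ.filter (fun k => k ≠ j), ((dlt i k - dlt i j) * Γ j k) * R j
      = ∑ j, Γ j i * R j := by
    have split : ∀ j, ∑ k ∈ Finset.univ.filter (fun k => k ≠ j),
        ((dlt i k - dlt i j) * Γ j k) * R j
        = (∑ k ∈ Finset.univ.filter (fun k => k ≠ j), dlt i k * (Γ j k * R j))
          - dlt i j * ((∑ k ∈ Finset.univ.filter (fun k => k ≠ j), Γ j k) * R j) := by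
      intro j
      have e : dlt i j * ((∑ k ∈ Finset.univ.filter (fun k => k ≠ j), Γ j k) * R j)
          = ∑ k ∈ Finset.univ.filter (fun k => k ≠ j), dlt i j * (Γ j k * R j) := by
        rw [Finset.sum_mul, Finset.mul_sum]
      rw [e, ← Finset.sum_sub_distrib]
      refine Finset.sum_congr rfl fun k _ => ?_; ring
    have inner1 : ∀ j, ∑ k ∈ Finset.univ.filter (fun k => k ≠ j), dlt i k * (Γ j k * R j)
        = if i = j then 0 else Γ j i * R j := by
      intro j
      simp only [dlt, ite_mul, one_mul, zero_mul]
      rw [Finset.sum_ite_eq]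
      simp only [Finset.mem_filter, Finset.mem_univ, true_and]
      by_cases h : i = j <;> simp [h]
    have hrow : ∀ j, ∑ k ∈ Finset.univ.filter (fun k => k ≠ j), Γ j k = -(Γ j j) := by
      intro j
      have hf : Finset.univ.filter (fun k => k ≠ j) = Finset.univ.erase j :=
        Finset.filter_ne' _ _
      have := Finset.add_sum_erase Finset.univ (Γ j) (Finset.mem_univ j)
      rw [hf]
      rw [hΓ_row j] at this
      linarith
    calc ∑ j, ∑ k ∈ Finset.univ.filter (fun k => k ≠ j), ((dlt i k - dlt i j) * Γ j k) * R j
        = ∑ j, ((if i = j then 0 else Γ j i * R j) - dlt i j * ((-(Γ j j)) * R j)) := by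
          refine Finset.sum_congr rfl fun j _ => ?_
          rw [split j, inner1 j, hrow j]
      _ = (∑ j, (if i = j then 0 else Γ j i * R j)) - ∑ j, dlt i j * ((-(Γ j j)) * R j) :=
          Finset.sum_sub_distrib _ _
      _ = ((∑ j, Γ j i * R j) - Γ i i * R i) - (-(Γ i i) * R i) := by
          congr 1
          · have : ∀ j ∈ Finset.univ, (if i = j then 0 else Γ j i * R j)
                = Γ j i * R j - (if i = j then Γ j i * R j else 0) := by
              intro j _; by_cases h : i = j <;> simp [h]
            rw [Finset.sum_congr rfl this, Finset.sum_sub_distrib, Finset.sum_ite_eq]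
            simp
          · simp [dlt, ite_mul, Finset.sum_ite_eq]
      _ = ∑ j, Γ j i * R j := by ring
  rw [h1, h2, h3]; ring

lemma core {d : ℕ} (lam : Fin d → ℝ) (Γ : Fin d → Fin d → ℝ)
    (hΓ_row : ∀ i, ∑ k, Γ i k = 0) (m : Fin d → ℝ)
    (V : (Fin d → ℕ) → ℝ) (hV0 : ∀ y, 0 ≤ V y) (hSV : Summable V)
    (M2 : Summable fun y : Fin d → ℕ => ((bullet y : ℝ))^2 * V y) (i : Fin d) :
    (∑' y : Fin d → ℕ, (y i : ℝ) *
      (-(V y) * (∑ j, ((y j : ℝ) * lam j + (y j : ℝ) * m j +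
          ∑ k ∈ Finset.univ.filter (fun k => k ≠ j), (y j : ℝ) * Γ j k))
        + ∑ j, ((if y j = 0 then 0 else ((y j : ℝ) - 1) * lam j * V (y - eVec j))
            + ((y j : ℝ) + 1) * m j * V (y + eVec j)
            + ∑ k ∈ Finset.univ.filter (fun k => k ≠ j),
                (if y k = 0 then 0 else ((y j : ℝ) + 1) * Γ j k * V (y - eVec k + eVec j)))))
    = (lam i - m i) * (∑' y : Fin d → ℕ, (y i : ℝ) * V y)
        + ∑ j, Γ j i * (∑' y : Fin d → ℕ, (y j : ℝ) * V y) := by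
  -- pointwise decomposition
  have key : ∀ y : Fin d → ℕ, (y i : ℝ) *
      (-(V y) * (∑ j, ((y j : ℝ) * lam j + (y j : ℝ) * m j +
          ∑ k ∈ Finset.univ.filter (fun k => k ≠ j), (y j : ℝ) * Γ j k))
        + ∑ j, ((if y j = 0 then 0 else ((y j : ℝ) - 1) * lam j * V (y - eVec j))
            + ((y j : ℝ) + 1) * m j * V (y + eVec j)
            + ∑ k ∈ Finset.univ.filter (fun k => k ≠ j),
                (if y k = 0 then 0 else ((y j : ℝ) + 1) * Γ j k * V (y - eVec k + eVec j))))
      = ∑ j, ((fB V (lam j) i j y - outT V (lam j) i j y)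
          + (fD V (m j) i j y - outT V (m j) i j y)
          + ∑ k ∈ Finset.univ.filter (fun k => k ≠ j),
              (fM V (Γ j k) i j k y - outT V (Γ j k) i j y)) := by
    intro y
    rw [mul_add]
    have e1 : (y i : ℝ) * (-(V y) * (∑ j, ((y j : ℝ) * lam j + (y j : ℝ) * m j +
        ∑ k ∈ Finset.univ.filter (fun k => k ≠ j), (y j : ℝ) * Γ j k)))
        = ∑ j, (-((y i : ℝ) * V y) * ((y j : ℝ) * lam j + (y j : ℝ) * m j +
        ∑ k ∈ Finset.univ.filter (fun k => k ≠ j), (y j : ℝ) * Γ j k)) := by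
      rw [← Finset.mul_sum]; ring
    rw [e1, Finset.mul_sum, ← Finset.sum_add_distrib]
    refine Finset.sum_congr rfl fun j _ => ?_
    have c1 : (y i : ℝ) * (if y j = 0 then 0 else ((y j : ℝ) - 1) * lam j * V (y - eVec j))
        - (y i : ℝ) * V y * ((y j : ℝ) * lam j)
        = fB V (lam j) i j y - outT V (lam j) i j y := by
      unfold fB outT; split_ifs <;> ring
    have c2 : (y i : ℝ) * (((y j : ℝ) + 1) * m j * V (y + eVec j))
        - (y i : ℝ) * V y * ((y j : ℝ) * m j)
        = fD V (m j) i j y - outT V (m j) i j y := by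
      unfold fD outT; ring
    have c3 : (y i : ℝ) * (∑ k ∈ Finset.univ.filter (fun k => k ≠ j),
          (if y k = 0 then 0 else ((y j : ℝ) + 1) * Γ j k * V (y - eVec k + eVec j)))
        - (y i : ℝ) * V y * (∑ k ∈ Finset.univ.filter (fun k => k ≠ j), (y j : ℝ) * Γ j k)
        = ∑ k ∈ Finset.univ.filter (fun k => k ≠ j),
            (fM V (Γ j k) i j k y - outT V (Γ j k) i j y) := by
      rw [Finset.mul_sum, Finset.mul_sum, ← Finset.sum_sub_distrib]
      refine Finset.sum_congr rfl fun k _ => ?_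
      unfold fM outT; split_ifs <;> ring
    rw [← c1, ← c2, ← c3]
    ring
  rw [tsum_congr key]
  -- summabilities
  have sfB : ∀ (c : ℝ) (j : Fin d), Summable (fun y => fB V c i j y - outT V c i j y) :=
    fun c j => (summable_fB V hV0 M2 hSV c i j).sub (summable_outT V hV0 M2 hSV c i j)
  have sfD : ∀ (c : ℝ) (j : Fin d), Summable (fun y => fD V c i j y - outT V c i j y) :=
    fun c j => (summable_fD V hV0 M2 hSV c i j).sub (summable_outT V hV0 M2 hSV c i j)
  have sfM : ∀ (c : ℝ) (j k : Fin d), k ≠ j →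
      Summable (fun y => fM V c i j k y - outT V c i j y) :=
    fun c j k hk => (summable_fM V hV0 M2 hSV c i j k hk).sub (summable_outT V hV0 M2 hSV c i j)
  have sMS : ∀ j : Fin d, Summable (fun y => ∑ k ∈ Finset.univ.filter (fun k => k ≠ j),
      (fM V (Γ j k) i j k y - outT V (Γ j k) i j y)) := by
    intro j
    exact summable_sum fun k hk =>
      sfM (Γ j k) j k (Finset.mem_filter.1 hk).2
  rw [Summable.tsum_finsetSum (fun j _ => ((sfB (lam j) j).add (sfD (m j) j)).add (sMS j))]
  have hj : ∀ j ∈ Finset.univ, (∑' y, ((fB V (lam j) i j y - outT V (lam j) i j y)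
          + (fD V (m j) i j y - outT V (m j) i j y)
          + ∑ k ∈ Finset.univ.filter (fun k => k ≠ j),
              (fM V (Γ j k) i j k y - outT V (Γ j k) i j y)))
      = dlt i j * lam j * (∑' y : Fin d → ℕ, (y j : ℝ) * V y)
        + -(dlt i j * m j) * (∑' y : Fin d → ℕ, (y j : ℝ) * V y)
        + ∑ k ∈ Finset.univ.filter (fun k => k ≠ j),
            ((dlt i k - dlt i j) * Γ j k) * (∑' y : Fin d → ℕ, (y j : ℝ) * V y) := by
    intro j _
    rw [Summable.tsum_add ((sfB (lam j) j).add (sfD (m j) j)) (sMS j),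
      Summable.tsum_add (sfB (lam j) j) (sfD (m j) j),
      Summable.tsum_finsetSum (fun k hk => sfM (Γ j k) j k (Finset.mem_filter.1 hk).2),
      TB V hV0 M2 hSV (lam j) i j, TD V hV0 M2 hSV (m j) i j]
    congr 1
    refine Finset.sum_congr rfl fun k hk => ?_
    exact TM V hV0 M2 hSV (Γ j k) i j k (Finset.mem_filter.1 hk).2
  rw [Finset.sum_congr rfl hj]
  exact final_algebra lam m (fun j => ∑' y : Fin d → ℕ, (y j : ℝ) * V y) Γ hΓ_row i

/-- Moment closure (equation (4.1)): if `v` solves the forward equation of the simple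
MTBDP with moment-mediated mean-field interaction, has finite second moments, and its
first moment vector is differentiable with derivative obtained by termwise
differentiation, then the first moment vector `r(t) = r[v(t)]` satisfies the nonlinear
moment equation `r_i' = (λ_i − μ̃_i(r)) r_i + ∑_j Γ_{ji} r_j`. -/
theorem moment_closure (d : ℕ) (hd : 0 < d)
    (lam : Fin d → ℝ) (hlam : ∀ i, 0 ≤ lam i)
    (Γ : Fin d → Fin d → ℝ)
    (hΓ_off : ∀ i k, i ≠ k → 0 ≤ Γ i k)
    (hΓ_row : ∀ i, ∑ k, Γ i k = 0)
    (mu : (Fin d → ℝ) → Fin d → ℝ)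
    (hmu_cont : Continuous mu) (hmu_nonneg : ∀ x i, 0 ≤ mu x i)
    (v : ℝ → (Fin d → ℕ) → ℝ) (vd : ℝ → (Fin d → ℕ) → ℝ)
    -- `v` takes values in `M₁(ℕ₀^d)`
    (hv_pmf : ∀ t ≥ (0 : ℝ), IsPMF (v t))
    -- every coordinate of `v` is differentiable with derivative `vd`
    (hv_deriv : ∀ y : Fin d → ℕ, ∀ t ≥ (0 : ℝ),
      HasDerivWithinAt (fun s => v s y) (vd t y) (Set.Ici 0) t)
    -- `v` satisfies the forward equation
    (hv_fwd : ∀ y : Fin d → ℕ, ∀ t ≥ (0 : ℝ), vd t y = mfRHS lam Γ mu v t y)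
    -- finite second moments
    (hv_mom2 : ∀ t ≥ (0 : ℝ), Summable (fun y : Fin d → ℕ => ((bullet y : ℝ)) ^ 2 * v t y))
    -- the first moments are differentiable, with termwise-differentiated derivative
    (hr_deriv : ∀ i : Fin d, ∀ t ≥ (0 : ℝ),
      HasDerivWithinAt (fun s => momentVec v s i)
        (∑' y : Fin d → ℕ, (y i : ℝ) * vd t y) (Set.Ici 0) t) :
    ∀ i : Fin d, ∀ t ≥ (0 : ℝ),
      HasDerivWithinAt (fun s => momentVec v s i)
        ((lam i - mu (momentVec v t) i) * momentVec v t i +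
          ∑ j, Γ j i * momentVec v t j)
        (Set.Ici 0) t := by
  intro i t ht
  have h := hr_deriv i t ht
  have heq : (∑' y : Fin d → ℕ, (y i : ℝ) * vd t y)
      = (lam i - mu (momentVec v t) i) * momentVec v t i
        + ∑ j, Γ j i * momentVec v t j := by
    rw [tsum_congr (fun y => by rw [hv_fwd y t ht] :
      ∀ y : Fin d → ℕ, (y i : ℝ) * vd t y = (y i : ℝ) * mfRHS lam Γ mu v t y)]
    exact core lam Γ hΓ_row (mu (momentVec v t)) (v t) (hv_pmf t ht).1
      (hv_pmf t ht).2.summable (hv_mom2 t ht) i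
  exact heq ▸ h
end
end
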